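/- arXiv:1002.1833 — 2 statements merged into one kernel-verified Lean document; each statement's English description precedes it below -/
import Mathlib

section
/- Pattern-probing lemma: let P be a program without extra variables, let bot be a fresh 0-ary constructor, and define the map t ↦ t̂ on partial patterns by X̂ = X, ⊥̂ = bot, and (h t1…tm)^ = h t̂1 … t̂m. For each partial pattern t let g_t be a fresh unary function symbol and let P_{g_t} consist of the rules g_X U → U, g_⊥ X → bot, and g_{(h t1…tm)} (h X1…Xm) → h (g_{t1} X1) … (g_{tm} Xm). Set P' = P ⊎ P_{g_t}. Then (i) P' is a safe extension of (P, e), and (ii) for every expression e and partial pattern t built with the signature of P: t ∈ ⟦e⟧^P if and only if t̂ ∈ ⟦g_t e⟧^{P'}. -/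
/-- A signature: function symbols and constructor symbols, each with an arity. -/
structure Sig where
  FS : Type
  CS : Type
  arityF : FS → ℕ
  arityC : CS → ℕ

/-- Applicative partial expressions over a signature.  Variables are natural
numbers and `bot` is the distinguished 0-ary constructor `⊥`. -/
inductive Exp (σ : Sig) : Type where
  | var : ℕ → Exp σ
  | fn : σ.FS → Exp σ
  | cn : σ.CS → Exp σ
  | bot : Exp σ
  | app : Exp σ → Exp σ → Exp σ

variable {σ : Sig}

/-- `applyList e [e1, …, en]` is the curried application `e e1 … en`. -/
def applyList (e : Exp σ) (es : List (Exp σ)) : Exp σ := es.foldl Exp.app e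

/-- Partial patterns `Pat_⊥`. -/
inductive IsPPat : Exp σ → Prop where
  | var (x : ℕ) : IsPPat (Exp.var x)
  | bot : IsPPat (Exp.bot : Exp σ)
  | capp (c : σ.CS) (ts : List (Exp σ)) (har : ts.length ≤ σ.arityC c)
      (hts : ∀ t ∈ ts, IsPPat t) : IsPPat (applyList (Exp.cn c) ts)
  | fapp (f : σ.FS) (ts : List (Exp σ)) (har : ts.length < σ.arityF f)
      (hts : ∀ t ∈ ts, IsPPat t) : IsPPat (applyList (Exp.fn f) ts)

/-- The constructor `⊥` does not occur in the expression. -/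
def BotFree : Exp σ → Prop
  | .bot => False
  | .app a b => BotFree a ∧ BotFree b
  | _ => True

/-- Total patterns `Pat`. -/
def IsPat (t : Exp σ) : Prop := IsPPat t ∧ BotFree t

/-- First-order patterns `FOPat`. -/
inductive IsFOPat : Exp σ → Prop where
  | var (x : ℕ) : IsFOPat (Exp.var x)
  | capp (c : σ.CS) (ts : List (Exp σ)) (har : ts.length = σ.arityC c)
      (hts : ∀ t ∈ ts, IsFOPat t) : IsFOPat (applyList (Exp.cn c) ts)

/-- The list of occurrences of variables in an expression. -/
def occVars : Exp σ → List ℕ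
  | .var x => [x]
  | .app a b => occVars a ++ occVars b
  | _ => []

/-- Applying a substitution to an expression. -/
def subst (θ : ℕ → Exp σ) : Exp σ → Exp σ
  | .var x => θ x
  | .fn f => .fn f
  | .cn c => .cn c
  | .bot => .bot
  | .app a b => .app (subst θ a) (subst θ b)

/-- Partial-pattern substitutions `PSubst_⊥`. -/
def PSub (θ : ℕ → Exp σ) : Prop := ∀ x, IsPPat (θ x)

/-- A program rule `f t1 … tn → r` (the left-hand side is `f` applied to `lhs`). -/
structure Rule (σ : Sig) where
  fn : σ.FS
  lhs : List (Exp σ)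
  rhs : Exp σ

/-- Well-formedness of a rule: `f` is applied to as many arguments as its arity,
the arguments form a linear tuple of total patterns. -/
def Rule.WF (r : Rule σ) : Prop :=
  r.lhs.length = σ.arityF r.fn ∧ (∀ t ∈ r.lhs, IsPat t) ∧
    (r.lhs.flatMap occVars).Nodup

/-- The rule has no extra variables: all variables of the right-hand side occur
in the left-hand side. -/
def Rule.NoExtra (r : Rule σ) : Prop :=
  ∀ x ∈ occVars r.rhs, x ∈ r.lhs.flatMap occVars

abbrev Program (σ : Sig) := Set (Rule σ)

/-- A program without extra variables, all whose rules are well formed. -/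
def WFProg (P : Program σ) : Prop := ∀ r ∈ P, r.WF ∧ r.NoExtra

/-- `h ∈ Σ` (a function symbol, a constructor symbol, or `⊥`). -/
def IsSymb : Exp σ → Prop
  | .fn _ => True
  | .cn _ => True
  | .bot => True
  | _ => False

/-- HOCRWL derivation trees for statements `e ⇒ t`, with rules
(B), (RR), (DC) and (OR). -/
inductive DTree (P : Program σ) : Exp σ → Exp σ → Type where
  | bot (e : Exp σ) : DTree P e Exp.bot
  | rr (x : ℕ) : DTree P (Exp.var x) (Exp.var x)
  | dc (h : Exp σ) (es ts : List (Exp σ)) (hsym : IsSymb h)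
      (hlen : es.length = ts.length) (hpat : IsPPat (applyList h ts))
      (ds : ∀ p ∈ es.zip ts, DTree P p.1 p.2) :
      DTree P (applyList h es) (applyList h ts)
  | opr (r : Rule σ) (hr : r ∈ P) (θ : ℕ → Exp σ) (hθ : PSub θ)
      (es as : List (Exp σ)) (t : Exp σ) (hlen : es.length = r.lhs.length)
      (ds : ∀ p ∈ es.zip (r.lhs.map (subst θ)), DTree P p.1 p.2)
      (d : DTree P (applyList (subst θ r.rhs) as) t) :
      DTree P (applyList (Exp.fn r.fn) (es ++ as)) t

/-- `P ⊢ e ⇒ t` is derivable in the HOCRWL proof calculus. -/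
def Deriv (P : Program σ) (e t : Exp σ) : Prop := Nonempty (DTree P e t)

/-- The HOCRWL denotation `⟦e⟧^P = { t ∈ Pat_⊥ | P ⊢ e ⇒ t }`. -/
def den (P : Program σ) (e : Exp σ) : Set (Exp σ) := {t | IsPPat t ∧ Deriv P e t}

/-- Observations: total patterns in the denotation. -/
def Obs (P : Program σ) (e : Exp σ) : Set (Exp σ) := {t | t ∈ den P e ∧ BotFree t}

/-- First-order observations: first-order patterns in the denotation. -/
def ObsFO (P : Program σ) (e : Exp σ) : Set (Exp σ) := {t | t ∈ den P e ∧ IsFOPat t}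

/-- Contexts `C ::= [ ] | C e | e C`. -/
inductive Cntxt (σ : Sig) : Type where
  | hole : Cntxt σ
  | appL : Cntxt σ → Exp σ → Cntxt σ
  | appR : Exp σ → Cntxt σ → Cntxt σ

/-- Filling the hole of a context with an expression. -/
def Cntxt.fill : Cntxt σ → Exp σ → Exp σ
  | .hole, e => e
  | .appL C e', e => .app (C.fill e) e'
  | .appR e' C, e => .app e' (C.fill e)

/-- Function symbols occurring in an expression. -/
def expFS : Exp σ → Set σ.FS
  | .fn f => {f}
  | .app a b => expFS a ∪ expFS b
  | _ => ∅

/-- Function symbols occurring in a rule. -/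
def ruleFS (r : Rule σ) : Set σ.FS :=
  insert r.fn ((⋃ t ∈ r.lhs, expFS t) ∪ expFS r.rhs)

/-- Function symbols occurring in a program. -/
def progFS (P : Program σ) : Set σ.FS := ⋃ r ∈ P, ruleFS r

/-- Function symbols defined by a program (roots of left-hand sides). -/
def defs (P : Program σ) : Set σ.FS := Rule.fn '' P

/-- `P'` is a safe extension of `(P, e)`: `P' = P ⊎ P''` where `P''` defines no
function symbol occurring in `P` or in `e`. -/
def SafeExt (P P' : Program σ) (e : Exp σ) : Prop :=
  ∃ P'' : Program σ, P' = P ∪ P'' ∧ Disjoint P P'' ∧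
    Disjoint (defs P'') (expFS e ∪ progFS P)

/-- `e ∼ₙ e'` : `n`-extensional equivalence. -/
def ExtEquiv (P : Program σ) (n : ℕ) (e e' : Exp σ) : Prop :=
  ∀ es : List (Exp σ), es.length = n →
    den P (applyList e es) = den P (applyList e' es)

/-- The signature of `P` extended with a fresh 0-ary constructor `bot` and,
for every (partial pattern) `t`, a fresh unary function symbol `g_t`. -/
def extSig (σ : Sig) : Sig where
  FS := σ.FS ⊕ Exp σ
  CS := σ.CS ⊕ Unit
  arityF := Sum.elim σ.arityF fun _ => 1
  arityC := Sum.elim σ.arityC fun _ => 0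

/-- The embedding of expressions of the original signature into the
extended one. -/
def embed : Exp σ → Exp (extSig σ)
  | .var x => .var x
  | .fn f => .fn (.inl f)
  | .cn c => .cn (.inl c)
  | .bot => .bot
  | .app a b => .app (embed a) (embed b)

/-- The transformation `t ↦ t̂` : `X̂ = X`, `⊥̂ = bot`, and
`(h t1…tm)^ = h t̂1 … t̂m`. -/
def hat : Exp σ → Exp (extSig σ)
  | .var x => .var x
  | .fn f => .fn (.inl f)
  | .cn c => .cn (.inl c)
  | .bot => .cn (.inr ())
  | .app a b => .app (hat a) (hat b)

def embedRule (r : Rule σ) : Rule (extSig σ) :=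
  ⟨.inl r.fn, r.lhs.map embed, embed r.rhs⟩

def embedProg (P : Program σ) : Program (extSig σ) := embedRule '' P

/-- The fresh function symbol `g_t`, as an expression. -/
def gE (t : Exp σ) : Exp (extSig σ) := .fn (.inr t)

/-- A symbol `h ∈ FS ∪ CS` as an expression. -/
def symExp : σ.FS ⊕ σ.CS → Exp σ := Sum.elim Exp.fn Exp.cn

/-- The rule `g_{h t1…tm} (h X1…Xm) → h (g_{t1} X1) … (g_{tm} Xm)`. -/
def gAppRule (h : σ.FS ⊕ σ.CS) (ts : List (Exp σ)) : Rule (extSig σ) where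
  fn := .inr (applyList (symExp h) ts)
  lhs := [applyList (embed (symExp h)) ((List.range ts.length).map Exp.var)]
  rhs := applyList (embed (symExp h))
      (ts.mapIdx fun i t => Exp.app (gE t) (Exp.var i))

/-- The program `P_{g_t}` consisting of the rules `g_X U → U`,
`g_⊥ X → bot` and `g_{h t1…tm} (h X1…Xm) → h (g_{t1} X1) … (g_{tm} Xm)`. -/
def Pg (σ : Sig) : Program (extSig σ) :=
  {r | (∃ x : ℕ, r = ⟨.inr (.var x), [.var 0], .var 0⟩) ∨
       r = ⟨.inr .bot, [.var 0], .cn (.inr ())⟩ ∨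
       ∃ (h : σ.FS ⊕ σ.CS) (ts : List (Exp σ)),
         IsPPat (applyList (symExp h) ts) ∧ r = gAppRule h ts}

section Basic
variable {σ : Sig}

@[simp] lemma applyList_nil (h : Exp σ) : applyList h [] = h := rfl

@[simp] lemma applyList_cons (h : Exp σ) (a : Exp σ) (l : List (Exp σ)) :
    applyList h (a :: l) = applyList (Exp.app h a) l := rfl

lemma applyList_append (h : Exp σ) (l l' : List (Exp σ)) :
    applyList h (l ++ l') = applyList (applyList h l) l' := List.foldl_append ..

lemma applyList_concat (h : Exp σ) (l : List (Exp σ)) (b : Exp σ) :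
    applyList h (l ++ [b]) = Exp.app (applyList h l) b := by
  simp [applyList_append]

/-- `e` is not an application. -/
def NotApp : Exp σ → Prop
  | .app _ _ => False
  | _ => True

lemma applyList_eq_self {h h' : Exp σ} {es : List (Exp σ)} (hh' : NotApp h')
    (heq : applyList h es = h') : es = [] ∧ h = h' := by
  induction es using List.reverseRecOn with
  | nil => exact ⟨rfl, heq⟩
  | append_singleton l b ih =>
    rw [applyList_concat] at heq
    subst heq
    exact absurd hh' (by simp [NotApp])

lemma applyList_inj {h h' : Exp σ} {es es' : List (Exp σ)} (hh : NotApp h) (hh' : NotApp h')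
    (heq : applyList h es = applyList h' es') : h = h' ∧ es = es' := by
  induction es' using List.reverseRecOn generalizing es with
  | nil =>
    obtain ⟨h1, h2⟩ := applyList_eq_self hh' heq
    exact ⟨h2, by simp [h1]⟩
  | append_singleton l' b' ih =>
    rw [applyList_concat] at heq
    induction es using List.reverseRecOn with
    | nil =>
      simp only [applyList_nil] at heq
      subst heq; exact absurd hh (by simp [NotApp])
    | append_singleton l b _ =>
      rw [applyList_concat] at heq
      obtain ⟨e1, e2⟩ := Exp.app.inj heq
      obtain ⟨f1, f2⟩ := ih e1
      exact ⟨f1, by rw [f2, e2]⟩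

lemma isSymb_notApp {h : Exp σ} (hs : IsSymb h) : NotApp h := by
  cases h <;> simp_all [NotApp, IsSymb]

lemma isPPat_app {a b : Exp σ} (hp : IsPPat (Exp.app a b)) : IsPPat a ∧ IsPPat b := by
  generalize he : Exp.app a b = e at hp
  cases hp with
  | var x => cases he
  | bot => cases he
  | capp c ts har hts =>
    induction ts using List.reverseRecOn with
    | nil => cases he
    | append_singleton l x _ =>
      rw [applyList_concat] at he
      obtain ⟨h1, h2⟩ := Exp.app.inj he
      subst h1 h2
      refine ⟨IsPPat.capp c l (le_trans (by simp) har) ?_, hts _ (by simp)⟩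
      exact fun t ht => hts t (by simp [ht])
  | fapp f ts har hts =>
    induction ts using List.reverseRecOn with
    | nil => cases he
    | append_singleton l x _ =>
      rw [applyList_concat] at he
      obtain ⟨h1, h2⟩ := Exp.app.inj he
      subst h1 h2
      refine ⟨IsPPat.fapp f l (lt_of_le_of_lt (by simp) har) ?_, hts _ (by simp)⟩
      exact fun t ht => hts t (by simp [ht])

lemma isPPat_applyList_mem {h : Exp σ} {es : List (Exp σ)}
    (hp : IsPPat (applyList h es)) : IsPPat h ∧ ∀ e ∈ es, IsPPat e := by
  induction es using List.reverseRecOn with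
  | nil => exact ⟨hp, by simp⟩
  | append_singleton l b ih =>
    rw [applyList_concat] at hp
    obtain ⟨h1, h2⟩ := isPPat_app hp
    obtain ⟨h3, h4⟩ := ih h1
    refine ⟨h3, fun e he => ?_⟩
    rcases List.mem_append.1 he with he | he
    · exact h4 e he
    · simp at he; subst he; exact h2

lemma isPPat_fn_length {f : σ.FS} {es : List (Exp σ)}
    (hp : IsPPat (applyList (Exp.fn f) es)) : es.length < σ.arityF f := by
  generalize he : applyList (Exp.fn f) es = e at hp
  cases hp with
  | var x => exact absurd (applyList_eq_self (by simp [NotApp]) he).2 (by simp)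
  | bot => exact absurd (applyList_eq_self (by simp [NotApp]) he).2 (by simp)
  | capp c ts har hts => cases (applyList_inj (by simp [NotApp]) (by simp [NotApp]) he).1
  | fapp g ts har hts =>
    obtain ⟨h1, h2⟩ := applyList_inj (by simp [NotApp]) (by simp [NotApp]) he
    cases h1; cases h2; exact har

lemma isPPat_cn_length {c : σ.CS} {es : List (Exp σ)}
    (hp : IsPPat (applyList (Exp.cn c) es)) : es.length ≤ σ.arityC c := by
  generalize he : applyList (Exp.cn c) es = e at hp
  cases hp with
  | var x => exact absurd (applyList_eq_self (by simp [NotApp]) he).2 (by simp)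
  | bot => exact absurd (applyList_eq_self (by simp [NotApp]) he).2 (by simp)
  | fapp g ts har hts => cases (applyList_inj (by simp [NotApp]) (by simp [NotApp]) he).1
  | capp c' ts har hts =>
    obtain ⟨h1, h2⟩ := applyList_inj (by simp [NotApp]) (by simp [NotApp]) he
    cases h1; cases h2; exact har

end Basic

section Approx
variable {σ : Sig}

/-- The approximation order (`q` approximates `p`). -/
inductive Approx : Exp σ → Exp σ → Prop
  | bot (e : Exp σ) : Approx .bot e
  | var (x : ℕ) : Approx (.var x) (.var x)
  | fn (f : σ.FS) : Approx (.fn f) (.fn f)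
  | cn (c : σ.CS) : Approx (.cn c) (.cn c)
  | app {a a' b b' : Exp σ} : Approx a a' → Approx b b' → Approx (.app a b) (.app a' b')

lemma approx_refl_symb {h : Exp σ} (hs : IsSymb h) : Approx h h := by
  cases h <;> first | exact .fn _ | exact .cn _ | exact .bot _ | simp [IsSymb] at hs

lemma approx_applyList {h h' : Exp σ} {qs ts : List (Exp σ)}
    (hh : Approx h h') (hlen : qs.length = ts.length)
    (hq : ∀ p ∈ qs.zip ts, Approx p.1 p.2) :
    Approx (applyList h qs) (applyList h' ts) := by
  induction qs generalizing h h' ts with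
  | nil => rw [List.length_nil] at hlen; rw [eq_comm, List.length_eq_zero_iff] at hlen; subst hlen; exact hh
  | cons a l ih =>
    cases ts with
    | nil => simp at hlen
    | cons b ts' =>
      simp only [applyList_cons]
      refine ih (Approx.app hh (hq (a, b) (by simp))) (by simpa using hlen) ?_
      exact fun p hp => hq p (by simp [hp])

lemma approx_var_inv {q : Exp σ} {x : ℕ} (h : Approx q (Exp.var x)) :
    q = Exp.bot ∨ q = Exp.var x := by
  cases h <;> simp

lemma approx_bot_inv {q : Exp σ} (h : Approx q Exp.bot) : q = Exp.bot := by
  cases h; rfl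

lemma approx_applyList_inv {q h : Exp σ} {ts : List (Exp σ)}
    (hs : IsSymb h) (hq : IsPPat q) (ha : Approx q (applyList h ts)) :
    q = Exp.bot ∨ ∃ qs, q = applyList h qs ∧ qs.length = ts.length ∧
      ∀ p ∈ qs.zip ts, Approx p.1 p.2 := by
  induction ts using List.reverseRecOn generalizing q with
  | nil =>
    simp only [applyList_nil] at ha
    cases h with
    | fn f =>
      cases ha with
      | bot => exact Or.inl rfl
      | fn => exact Or.inr ⟨[], rfl, rfl, by simp⟩
    | cn c =>
      cases ha with
      | bot => exact Or.inl rfl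
      | cn => exact Or.inr ⟨[], rfl, rfl, by simp⟩
    | bot => exact Or.inl (approx_bot_inv ha)
    | var x => simp [IsSymb] at hs
    | app a b => simp [IsSymb] at hs
  | append_singleton l b ih =>
    rw [applyList_concat] at ha
    generalize hE : Exp.app (applyList h l) b = E at ha
    cases ha with
    | bot => exact Or.inl rfl
    | var x => cases hE
    | fn f => cases hE
    | cn c => cases hE
    | app h1 h2 =>
      obtain ⟨e1, e2⟩ := Exp.app.inj hE.symm
      subst e1 e2
      obtain ⟨hqa, hqb⟩ := isPPat_app hq
      rcases ih hqa h1 with h3 | ⟨qs, h3, h4, h5⟩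
      · subst h3
        -- q = .app .bot _, but q is a partial pattern: impossible
        exfalso
        generalize hq2 : Exp.app Exp.bot _ = q2 at hq
        cases hq with
        | var x => cases hq2
        | bot => cases hq2
        | capp c ts har hts =>
          induction ts using List.reverseRecOn with
          | nil => cases hq2
          | append_singleton l' b' _ =>
            rw [applyList_concat] at hq2
            obtain ⟨g1, g2⟩ := Exp.app.inj hq2
            exact absurd (applyList_eq_self (by simp [NotApp]) g1.symm).2 (by simp)
        | fapp f ts har hts =>
          induction ts using List.reverseRecOn with
          | nil => cases hq2
          | append_singleton l' b' _ =>
            rw [applyList_concat] at hq2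
            obtain ⟨g1, g2⟩ := Exp.app.inj hq2
            exact absurd (applyList_eq_self (by simp [NotApp]) g1.symm).2 (by simp)
      · subst h3
        refine Or.inr ⟨qs ++ [_], (applyList_concat ..).symm, by simp [h4], ?_⟩
        intro p hp
        rw [List.zip_append (by simpa using h4)] at hp
        rcases List.mem_append.1 hp with hp | hp
        · exact h5 p hp
        · simp at hp; subst hp; exact h2

end Approx

section DerivBasic
variable {σ : Sig} {P : Program σ}

lemma zip_getElem_mem {α β : Type*} (l1 : List α) (l2 : List β) (i : ℕ)
    (h1 : i < l1.length) (h2 : i < l2.length) : (l1[i], l2[i]) ∈ l1.zip l2 := by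
  have : (l1.zip l2)[i]'(by simp [List.length_zip]; omega) = (l1[i], l2[i]) := by
    simp [List.getElem_zip]
  rw [← this]
  exact List.getElem_mem _

lemma zip_mem_getElem {α β : Type*} {l1 : List α} {l2 : List β} {p : α × β}
    (hp : p ∈ l1.zip l2) : ∃ (i : ℕ) (h1 : i < l1.length) (h2 : i < l2.length),
      p = (l1[i], l2[i]) := by
  obtain ⟨i, hi, he⟩ := List.mem_iff_getElem.1 hp
  have hi1 : i < l1.length := lt_of_lt_of_le hi (by simp [List.length_zip])
  have hi2 : i < l2.length := lt_of_lt_of_le hi (by simp [List.length_zip])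
  exact ⟨i, hi1, hi2, by rw [← he]; simp [List.getElem_zip]⟩

/-- Reflexivity: every partial pattern derives itself. -/
lemma deriv_refl {p : Exp σ} (hp : IsPPat p) : Deriv P p p := by
  induction hp with
  | var x => exact ⟨.rr x⟩
  | bot => exact ⟨.bot _⟩
  | capp c ts har hts ih =>
    refine ⟨.dc (Exp.cn c) ts ts trivial rfl (.capp c ts har hts) fun p hp =>
      Classical.choice (show Deriv P p.1 p.2 from ?_)⟩
    obtain ⟨i, h1, h2, he⟩ := zip_mem_getElem hp
    subst he
    exact ih _ (List.getElem_mem _)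
  | fapp f ts har hts ih =>
    refine ⟨.dc (Exp.fn f) ts ts trivial rfl (.fapp f ts har hts) fun p hp =>
      Classical.choice (show Deriv P p.1 p.2 from ?_)⟩
    obtain ⟨i, h1, h2, he⟩ := zip_mem_getElem hp
    subst he
    exact ih _ (List.getElem_mem _)

/-- Case analysis on a derivation, as a `Prop`. -/
lemma deriv_cases {E s : Exp σ} (d : DTree P E s) :
    s = Exp.bot ∨
    (∃ x, E = Exp.var x ∧ s = Exp.var x) ∨
    (∃ h es ts, E = applyList h es ∧ s = applyList h ts ∧ IsSymb h ∧
      es.length = ts.length ∧ IsPPat (applyList h ts) ∧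
      ∀ p ∈ es.zip ts, Deriv P p.1 p.2) ∨
    (∃ r, r ∈ P ∧ ∃ θ es as, PSub θ ∧ E = applyList (Exp.fn r.fn) (es ++ as) ∧
      es.length = r.lhs.length ∧
      (∀ p ∈ es.zip (r.lhs.map (subst θ)), Deriv P p.1 p.2) ∧
      Deriv P (applyList (subst θ r.rhs) as) s) := by
  cases d with
  | bot => exact Or.inl rfl
  | rr x => exact Or.inr (Or.inl ⟨x, rfl, rfl⟩)
  | dc h es ts hsym hlen hpat ds =>
    exact Or.inr (Or.inr (Or.inl ⟨h, es, ts, rfl, rfl, hsym, hlen, hpat,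
      fun p hp => ⟨ds p hp⟩⟩))
  | opr r hr θ hθ es as t hlen ds d =>
    exact Or.inr (Or.inr (Or.inr ⟨r, hr, θ, es, as, hθ, rfl, hlen,
      fun p hp => ⟨ds p hp⟩, ⟨d⟩⟩))

/-- A derivation starting from a partial pattern yields an approximation. -/
lemma approx_of_deriv (hW : WFProg P) {p q : Exp σ} (d : DTree P p q) (hp : IsPPat p) :
    Approx q p := by
  induction d with
  | bot => exact .bot _
  | rr x => exact .var x
  | dc h es ts hsym hlen hpat ds ih =>
    refine approx_applyList (approx_refl_symb hsym) hlen.symm fun pr hpr => ?_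
    obtain ⟨i, h1, h2, he⟩ := zip_mem_getElem hpr
    subst he
    exact ih (es[i], ts[i]) (zip_getElem_mem es ts i h2 h1)
      ((isPPat_applyList_mem hp).2 _ (List.getElem_mem _))
  | opr r hr θ hθ es as t hlen ds d ih ih2 =>
    exfalso
    have h1 := isPPat_fn_length hp
    have h2 := ((hW r hr).1).1
    simp only [List.length_append] at h1
    omega

lemma approx_var_left {p : Exp σ} {x : ℕ} (h : Approx (Exp.var x) p) : p = Exp.var x := by
  cases h; rfl

lemma deriv_var_eq (hW : WFProg P) {p : Exp σ} {x : ℕ} (d : DTree P p (Exp.var x))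
    (hp : IsPPat p) : p = Exp.var x :=
  approx_var_left (approx_of_deriv hW d hp)

/-- Monotonicity in the output: anything approximating a derivable pattern is derivable. -/
lemma deriv_mono {e p : Exp σ} (d : DTree P e p) :
    ∀ q, Approx q p → IsPPat q → Deriv P e q := by
  induction d with
  | bot e =>
    intro q hq _
    rw [approx_bot_inv hq]
    exact ⟨.bot e⟩
  | rr x =>
    intro q hq _
    rcases approx_var_inv hq with h | h <;> subst h
    · exact ⟨.bot _⟩
    · exact ⟨.rr x⟩
  | dc h es ts hsym hlen hpat ds ih =>
    intro q hq hqp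
    rcases approx_applyList_inv hsym hqp hq with h1 | ⟨qs, h1, h2, h3⟩
    · subst h1; exact ⟨.bot _⟩
    · subst h1
      refine ⟨.dc h es qs hsym (by omega) hqp fun pr hpr =>
        Classical.choice (show Deriv P pr.1 pr.2 from ?_)⟩
      obtain ⟨i, i1, i2, he⟩ := zip_mem_getElem hpr
      subst he
      refine ih (es[i], ts[i]) (zip_getElem_mem es ts i i1 (by omega)) qs[i] ?_ ?_
      · exact h3 (qs[i], ts[i]) (zip_getElem_mem qs ts i i2 (by omega))
      · exact (isPPat_applyList_mem hqp).2 _ (List.getElem_mem _)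
  | opr r hr θ hθ es as t hlen ds d ih ih2 =>
    intro q hq hqp
    obtain ⟨d'⟩ := ih2 q hq hqp
    exact ⟨.opr r hr θ hθ es as q hlen ds d'⟩

end DerivBasic

section Embed
variable {σ : Sig}

@[simp] lemma extSig_arityF_inl (f : σ.FS) : (extSig σ).arityF (.inl f) = σ.arityF f := rfl
@[simp] lemma extSig_arityF_inr (t : Exp σ) : (extSig σ).arityF (.inr t) = 1 := rfl
@[simp] lemma extSig_arityC_inl (c : σ.CS) : (extSig σ).arityC (.inl c) = σ.arityC c := rfl
@[simp] lemma extSig_arityC_inr (u : Unit) : (extSig σ).arityC (.inr u) = 0 := rfl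

/-- The inverse of `embed` (fresh symbols are mapped to `⊥`). -/
def unembed : Exp (extSig σ) → Exp σ
  | .var x => .var x
  | .fn f => Sum.elim Exp.fn (fun _ => Exp.bot) f
  | .cn c => Sum.elim Exp.cn (fun _ => Exp.bot) c
  | .bot => .bot
  | .app a b => .app (unembed a) (unembed b)

/-- Expressions of the extended signature containing no fresh symbols. -/
def Old : Exp (extSig σ) → Prop
  | .var _ => True
  | .fn f => f.isLeft
  | .cn c => c.isLeft
  | .bot => True
  | .app a b => Old a ∧ Old b

@[simp] lemma unembed_embed (e : Exp σ) : unembed (embed e) = e := by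
  induction e <;> simp_all [embed, unembed]

lemma old_embed (e : Exp σ) : Old (embed e) := by
  induction e <;> simp_all [embed, Old]

lemma embed_unembed {E : Exp (extSig σ)} (hE : Old E) : embed (unembed E) = E := by
  induction E with
  | var x => rfl
  | fn f => cases f with
    | inl f => rfl
    | inr t => simp [Old] at hE
  | cn c => cases c with
    | inl c => rfl
    | inr u => simp [Old] at hE
  | bot => rfl
  | app a b ih1 ih2 =>
    obtain ⟨h1, h2⟩ := hE
    simp [unembed, embed, ih1 h1, ih2 h2]

lemma embed_applyList (h : Exp σ) (l : List (Exp σ)) :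
    embed (applyList h l) = applyList (embed h) (l.map embed) := by
  induction l generalizing h with
  | nil => rfl
  | cons a l ih => simp only [applyList_cons, List.map_cons, ih]; rfl

lemma hat_applyList (h : Exp σ) (l : List (Exp σ)) :
    hat (applyList h l) = applyList (hat h) (l.map hat) := by
  induction l generalizing h with
  | nil => rfl
  | cons a l ih => simp only [applyList_cons, List.map_cons, ih]; rfl

lemma unembed_applyList (h : Exp (extSig σ)) (l : List (Exp (extSig σ))) :
    unembed (applyList h l) = applyList (unembed h) (l.map unembed) := by
  induction l generalizing h with
  | nil => rfl
  | cons a l ih => simp only [applyList_cons, List.map_cons, ih]; rfl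

lemma subst_applyList (θ : ℕ → Exp σ) (h : Exp σ) (l : List (Exp σ)) :
    subst θ (applyList h l) = applyList (subst θ h) (l.map (subst θ)) := by
  induction l generalizing h with
  | nil => rfl
  | cons a l ih => simp only [applyList_cons, List.map_cons, ih]; rfl

lemma embed_subst (θ : ℕ → Exp σ) (u : Exp σ) :
    subst (fun x => embed (θ x)) (embed u) = embed (subst θ u) := by
  induction u <;> simp_all [embed, subst]

lemma unembed_subst_embed (θ : ℕ → Exp (extSig σ)) (u : Exp σ) :
    unembed (subst θ (embed u)) = subst (fun x => unembed (θ x)) u := by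
  induction u <;> simp_all [embed, subst, unembed]

lemma occVars_applyList (h : Exp σ) (l : List (Exp σ)) :
    occVars (applyList h l) = occVars h ++ l.flatMap occVars := by
  induction l generalizing h with
  | nil => simp [applyList_nil]
  | cons a l ih => simp [applyList_cons, ih, occVars]

@[simp] lemma occVars_embed (u : Exp σ) : occVars (embed u) = occVars u := by
  induction u <;> simp_all [embed, occVars]

lemma hat_ne_bot (t : Exp σ) : hat t ≠ Exp.bot := by cases t <;> simp [hat]

lemma embed_isPPat {t : Exp σ} (ht : IsPPat t) : IsPPat (embed t) := by
  induction ht with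
  | var x => exact .var x
  | bot => exact .bot
  | capp c ts har hts ih =>
    rw [embed_applyList]
    exact .capp (Sum.inl c) (ts.map embed) (by simpa using har) (by simpa using ih)
  | fapp f ts har hts ih =>
    rw [embed_applyList]
    exact .fapp (Sum.inl f) (ts.map embed) (by simpa using har) (by simpa using ih)

lemma hat_isPPat {t : Exp σ} (ht : IsPPat t) : IsPPat (hat t) := by
  induction ht with
  | var x => exact .var x
  | bot => exact IsPPat.capp (σ := extSig σ) (Sum.inr ()) [] (by simp) (by simp)
  | capp c ts har hts ih =>
    rw [hat_applyList]
    exact .capp (Sum.inl c) (ts.map hat) (by simpa using har) (by simpa using ih)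
  | fapp f ts har hts ih =>
    rw [hat_applyList]
    exact .fapp (Sum.inl f) (ts.map hat) (by simpa using har) (by simpa using ih)

lemma unembed_isPPat {p : Exp (extSig σ)} (hp : IsPPat p) : IsPPat (unembed p) := by
  induction hp with
  | var x => exact .var x
  | bot => exact .bot
  | capp c ts har hts ih =>
    rw [unembed_applyList]
    cases c with
    | inl c =>
      exact .capp c (ts.map unembed) (by simpa using har) (by simpa using ih)
    | inr u =>
      simp only [extSig_arityC_inr, Nat.le_zero, List.length_eq_zero_iff] at har
      subst har
      exact .bot
  | fapp f ts har hts ih =>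
    rw [unembed_applyList]
    cases f with
    | inl f =>
      exact .fapp f (ts.map unembed) (by simpa using har) (by simpa using ih)
    | inr t =>
      simp only [extSig_arityF_inr, Nat.lt_one_iff, List.length_eq_zero_iff] at har
      subst har
      exact .bot

lemma embed_isPPat_iff {t : Exp σ} : IsPPat (embed t) ↔ IsPPat t :=
  ⟨fun h => by simpa using unembed_isPPat h, embed_isPPat⟩

lemma old_applyList {h : Exp (extSig σ)} {l : List (Exp (extSig σ))} :
    Old (applyList h l) ↔ Old h ∧ ∀ e ∈ l, Old e := by
  induction l generalizing h with
  | nil => simp [applyList_nil]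
  | cons a l ih =>
    simp only [applyList_cons, ih, List.mem_cons]
    constructor
    · rintro ⟨⟨h1, h2⟩, h3⟩
      exact ⟨h1, fun e he => he.elim (fun h => h ▸ h2) (h3 e)⟩
    · rintro ⟨h1, h2⟩
      exact ⟨⟨h1, h2 a (Or.inl rfl)⟩, fun e he => h2 e (Or.inr he)⟩

lemma old_subst_var {θ : ℕ → Exp (extSig σ)} {u : Exp σ} {x : ℕ}
    (hx : x ∈ occVars u) (ho : Old (subst θ (embed u))) : Old (θ x) := by
  induction u with
  | var y => simp [occVars] at hx; subst hx; exact ho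
  | fn f => simp [occVars] at hx
  | cn c => simp [occVars] at hx
  | bot => simp [occVars] at hx
  | app a b ih1 ih2 =>
    obtain ⟨h1, h2⟩ := ho
    rcases List.mem_append.1 hx with h | h
    · exact ih1 h h1
    · exact ih2 h h2

lemma old_subst {θ : ℕ → Exp (extSig σ)} {u : Exp σ}
    (hθ : ∀ x ∈ occVars u, Old (θ x)) : Old (subst θ (embed u)) := by
  induction u with
  | var y => exact hθ y (by simp [occVars])
  | fn f => trivial
  | cn c => trivial
  | bot => trivial
  | app a b ih1 ih2 =>
    exact ⟨ih1 fun x hx => hθ x (List.mem_append.2 (Or.inl hx)),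
           ih2 fun x hx => hθ x (List.mem_append.2 (Or.inr hx))⟩

lemma isSymb_unembed {h : Exp (extSig σ)} (hs : IsSymb h) : IsSymb (unembed h) := by
  cases h with
  | fn f => cases f <;> trivial
  | cn c => cases c <;> trivial
  | bot => trivial
  | var x => simp [IsSymb] at hs
  | app a b => simp [IsSymb] at hs

lemma isSymb_embed {h : Exp σ} (hs : IsSymb h) : IsSymb (embed h) := by
  cases h <;> trivial

end Embed

section PgFacts
variable {σ : Sig}

lemma botFree_embed {t : Exp σ} (ht : BotFree t) : BotFree (embed t) := by
  induction t <;> simp_all [embed, BotFree]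

lemma botFree_applyList {h : Exp σ} {l : List (Exp σ)} :
    BotFree (applyList h l) ↔ BotFree h ∧ ∀ e ∈ l, BotFree e := by
  induction l generalizing h with
  | nil => simp [applyList_nil]
  | cons a l ih =>
    simp only [applyList_cons, ih, List.mem_cons]
    constructor
    · rintro ⟨⟨h1, h2⟩, h3⟩
      exact ⟨h1, fun e he => he.elim (fun h => h ▸ h2) (h3 e)⟩
    · rintro ⟨h1, h2⟩
      exact ⟨⟨h1, h2 a (Or.inl rfl)⟩, fun e he => h2 e (Or.inr he)⟩

lemma occVars_gAppRule_lhs (h : σ.FS ⊕ σ.CS) (m : ℕ) :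
    occVars (applyList (embed (symExp h)) ((List.range m).map Exp.var)) = List.range m := by
  rw [occVars_applyList]
  have h1 : occVars (embed (symExp h)) = [] := by
    cases h <;> rfl
  rw [h1, List.nil_append, List.flatMap_map]
  simp [occVars]

lemma occVars_gAppRule_rhs (h : σ.FS ⊕ σ.CS) (ts : List (Exp σ)) :
    ∀ x ∈ occVars (gAppRule h ts).rhs, x ∈ List.range ts.length := by
  intro x hx
  simp only [gAppRule] at hx
  rw [occVars_applyList] at hx
  have h1 : occVars (embed (symExp h)) = [] := by cases h <;> rfl
  rw [h1, List.nil_append, List.mem_flatMap] at hx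
  obtain ⟨e, he, hxe⟩ := hx
  rw [List.mem_iff_getElem] at he
  obtain ⟨i, hi, hie⟩ := he
  rw [List.getElem_mapIdx] at hie
  subst hie
  simp only [List.length_mapIdx] at hi
  simp only [occVars, gE] at hxe
  simp only [List.nil_append, List.mem_singleton] at hxe
  subst hxe
  exact List.mem_range.2 hi

lemma pg_fn_inr {r : Rule (extSig σ)} (hr : r ∈ Pg σ) : ∃ u, r.fn = Sum.inr u := by
  rcases hr with ⟨x, rfl⟩ | rfl | ⟨h, ts, hp, rfl⟩
  · exact ⟨_, rfl⟩
  · exact ⟨_, rfl⟩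
  · exact ⟨_, rfl⟩

lemma pg_lhs {r : Rule (extSig σ)} (hr : r ∈ Pg σ) : r.lhs.length = 1 := by
  rcases hr with ⟨x, rfl⟩ | rfl | ⟨h, ts, hp, rfl⟩ <;> rfl

@[simp] lemma embedRule_fn (r : Rule σ) : (embedRule r).fn = Sum.inl r.fn := rfl

lemma isPPat_gAppRule_lhs {h : σ.FS ⊕ σ.CS} {ts : List (Exp σ)}
    (hp : IsPPat (applyList (symExp h) ts)) :
    IsPPat (applyList (embed (symExp h)) ((List.range ts.length).map Exp.var)) := by
  cases h with
  | inl f =>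
    have := isPPat_fn_length (f := f) (by exact hp)
    exact IsPPat.fapp (σ := extSig σ) (Sum.inl f) _ (by simpa using this) (by simp; exact fun i _ => IsPPat.var i)
  | inr c =>
    have := isPPat_cn_length (c := c) (by exact hp)
    exact IsPPat.capp (σ := extSig σ) (Sum.inl c) _ (by simpa using this) (by simp; exact fun i _ => IsPPat.var i)

lemma wfProg_ext {P : Program σ} (hP : WFProg P) :
    WFProg (embedProg P ∪ Pg σ) := by
  intro r hr
  rcases hr with ⟨r0, hr0, rfl⟩ | hr
  · obtain ⟨⟨w1, w2, w3⟩, w4⟩ := hP r0 hr0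
    refine ⟨⟨by simpa [embedRule] using w1, ?_, ?_⟩, ?_⟩
    · rintro t ht
      simp only [embedRule, List.mem_map] at ht
      obtain ⟨t0, ht0, rfl⟩ := ht
      exact ⟨embed_isPPat (w2 t0 ht0).1, botFree_embed (w2 t0 ht0).2⟩
    · simp only [embedRule, List.flatMap_map]
      simpa only [occVars_embed] using w3
    · intro x hx
      simp only [embedRule, occVars_embed, List.flatMap_map] at hx ⊢
      have := w4 x hx
      rw [List.mem_flatMap] at this ⊢
      obtain ⟨t, ht, hxt⟩ := this
      exact ⟨t, ht, by simpa using hxt⟩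
  · rcases hr with ⟨x, rfl⟩ | rfl | ⟨h, ts, hp, rfl⟩
    · refine ⟨⟨rfl, ?_, by simp [occVars]⟩, ?_⟩
      · intro t ht
        rw [List.mem_singleton] at ht
        subst ht
        exact ⟨.var 0, trivial⟩
      · intro y hy
        simpa [occVars] using hy
    · refine ⟨⟨rfl, ?_, by simp [occVars]⟩, ?_⟩
      · intro t ht
        rw [List.mem_singleton] at ht
        subst ht
        exact ⟨.var 0, trivial⟩
      · intro y hy
        simp [occVars] at hy
    · refine ⟨⟨rfl, ?_, ?_⟩, ?_⟩
      · intro t ht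
        rw [show (gAppRule h ts).lhs = [applyList (embed (symExp h))
          ((List.range ts.length).map Exp.var)] from rfl, List.mem_singleton] at ht
        subst ht
        refine ⟨isPPat_gAppRule_lhs hp, ?_⟩
        rw [botFree_applyList]
        constructor
        · cases h <;> trivial
        · simp only [List.mem_map]
          rintro e ⟨i, hi, rfl⟩; trivial
      · show ([_].flatMap occVars).Nodup
        simp only [List.flatMap_cons, List.flatMap_nil, List.append_nil]
        rw [occVars_gAppRule_lhs]
        exact List.nodup_range
      · intro y hy
        have := occVars_gAppRule_rhs h ts y hy
        show y ∈ [_].flatMap occVars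
        simp only [List.flatMap_cons, List.flatMap_nil, List.append_nil]
        rw [occVars_gAppRule_lhs]
        exact this

end PgFacts

section Transfer
variable {σ : Sig} {P : Program σ}

lemma deriv_prog_mono {P Q : Program σ} (hPQ : P ⊆ Q) {e t : Exp σ}
    (d : DTree P e t) : Deriv Q e t := by
  induction d with
  | bot e => exact ⟨.bot e⟩
  | rr x => exact ⟨.rr x⟩
  | dc h es ts hsym hlen hpat ds ih =>
    exact ⟨.dc h es ts hsym hlen hpat fun p hp =>
      Classical.choice (ih p hp)⟩
  | opr r hr θ hθ es as t hlen ds d ih ih2 =>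
    exact ⟨.opr r (hPQ hr) θ hθ es as t hlen
      (fun p hp => Classical.choice (ih p hp)) (Classical.choice ih2)⟩

/-- Embedding derivations into the extended program. -/
lemma embed_deriv {e t : Exp σ} (d : DTree P e t) :
    Deriv (embedProg P) (embed e) (embed t) := by
  induction d with
  | bot e => exact ⟨.bot (embed e)⟩
  | rr x => exact ⟨.rr x⟩
  | dc h es ts hsym hlen hpat ds ih =>
    rw [embed_applyList, embed_applyList]
    refine ⟨.dc (embed h) (es.map embed) (ts.map embed) (isSymb_embed hsym)
      (by simp [hlen]) (by rw [← embed_applyList]; exact embed_isPPat hpat)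
      fun p hp => Classical.choice (show Deriv _ p.1 p.2 from ?_)⟩
    obtain ⟨i, h1, h2, he⟩ := zip_mem_getElem hp
    subst he
    simp only [List.getElem_map]
    exact ih (es[i]'(by simpa using h1), ts[i]'(by simpa using h2))
      (zip_getElem_mem _ _ _ (by simpa using h1) (by simpa using h2))
  | opr r hr θ hθ es as t hlen ds d ih ih2 =>
    rw [embed_applyList, List.map_append]
    refine ⟨.opr (embedRule r) (Set.mem_image_of_mem embedRule hr) (fun x => embed (θ x))
      (fun x => embed_isPPat (hθ x)) (es.map embed) (as.map embed) (embed t)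
      (by simp [embedRule, hlen]) ?_ ?_⟩
    · intro p hp
      refine Classical.choice (show Deriv _ p.1 p.2 from ?_)
      have hL : (embedRule r).lhs.map (subst fun x => embed (θ x)) =
          (r.lhs.map (subst θ)).map embed := by
        simp only [embedRule, List.map_map]
        exact List.map_congr_left fun u _ => by
          simp only [Function.comp_apply, embed_subst]
      rw [hL] at hp
      obtain ⟨i, h1, h2, he⟩ := zip_mem_getElem hp
      subst he
      simp only [List.getElem_map]
      have := ih (es[i]'(by simpa using h1), (r.lhs.map (subst θ))[i]'(by simpa using h2))
        (zip_getElem_mem _ _ _ (by simpa using h1) (by simpa using h2))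
      simpa [embedProg] using this
    · have : subst (fun x => embed (θ x)) (embedRule r).rhs = embed (subst θ r.rhs) := by
        simp only [embedRule]; exact embed_subst θ r.rhs
      rw [this, ← embed_applyList]
      exact Classical.choice ih2

/-- Conservativity: derivations from old expressions stay in the old world. -/
lemma back_deriv (hP : WFProg P) {E s : Exp (extSig σ)}
    (d : DTree (embedProg P ∪ Pg σ) E s) (hE : Old E) :
    Old s ∧ Deriv P (unembed E) (unembed s) := by
  induction d with
  | bot e => exact ⟨trivial, ⟨.bot _⟩⟩
  | rr x => exact ⟨trivial, ⟨.rr x⟩⟩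
  | dc h es ts hsym hlen hpat ds ih =>
    obtain ⟨hh, hes⟩ := old_applyList.1 hE
    have hts : ∀ i (hi : i < ts.length),
        Old (ts[i]) ∧ Deriv P (unembed (es[i]'(by omega))) (unembed ts[i]) := by
      intro i hi
      exact ih (es[i]'(by omega), ts[i]) (zip_getElem_mem _ _ _ (by omega) hi)
        (hes _ (List.getElem_mem _))
    have hOts : Old (applyList h ts) := by
      rw [old_applyList]
      refine ⟨hh, fun e he => ?_⟩
      obtain ⟨i, hi, rfl⟩ := List.mem_iff_getElem.1 he
      exact (hts i hi).1
    refine ⟨hOts, ?_⟩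
    rw [unembed_applyList, unembed_applyList]
    refine ⟨.dc (unembed h) (es.map unembed) (ts.map unembed) (isSymb_unembed hsym)
      (by simp [hlen]) (by rw [← unembed_applyList]; exact unembed_isPPat hpat)
      fun p hp => Classical.choice (show Deriv _ p.1 p.2 from ?_)⟩
    obtain ⟨i, h1, h2, he⟩ := zip_mem_getElem hp
    subst he
    simp only [List.getElem_map]
    exact (hts i (by simpa using h2)).2
  | opr r hr θ hθ es as t hlen ds d ih ih2 =>
    obtain ⟨hh, hargs⟩ := old_applyList.1 hE
    obtain ⟨r0, hr0, rfl⟩ : ∃ r0, r0 ∈ P ∧ embedRule r0 = r := by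
      rcases hr with ⟨r0, hr0, rfl⟩ | hr
      · exact ⟨r0, hr0, rfl⟩
      · obtain ⟨u, hu⟩ := pg_fn_inr hr
        rw [hu] at hh
        simp [Old] at hh
    have hes : ∀ e ∈ es, Old e := fun e he => hargs e (List.mem_append.2 (Or.inl he))
    have has : ∀ e ∈ as, Old e := fun e he => hargs e (List.mem_append.2 (Or.inr he))
    have hlhs : ∀ i (hi : i < r0.lhs.length),
        Old (subst θ (embed (r0.lhs[i]))) ∧
        Deriv P (unembed (es[i]'(by simp [embedRule] at hlen; omega)))
          (subst (fun x => unembed (θ x)) (r0.lhs[i])) := by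
      intro i hi
      have hi2 : i < ((embedRule r0).lhs.map (subst θ)).length := by
        simp [embedRule]; omega
      have hi1 : i < es.length := by simp [embedRule] at hlen; omega
      have := ih (es[i]'hi1, ((embedRule r0).lhs.map (subst θ))[i]'hi2)
        (zip_getElem_mem _ _ _ hi1 hi2) (hes _ (List.getElem_mem _))
      have hg : ((embedRule r0).lhs.map (subst θ))[i]'hi2 = subst θ (embed (r0.lhs[i])) := by
        simp [embedRule]
      rw [hg] at this
      rwa [unembed_subst_embed] at this
    have hθold : ∀ x ∈ r0.lhs.flatMap occVars, Old (θ x) := by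
      intro x hx
      rw [List.mem_flatMap] at hx
      obtain ⟨u, hu, hxu⟩ := hx
      obtain ⟨i, hi, rfl⟩ := List.mem_iff_getElem.1 hu
      exact old_subst_var hxu (hlhs i hi).1
    have hrhsold : Old (subst θ (embed r0.rhs)) :=
      old_subst fun x hx => hθold x ((hP r0 hr0).2 x hx)
    have hsrc : Old (applyList (subst θ (embedRule r0).rhs) as) := by
      rw [old_applyList]
      exact ⟨by simpa only [embedRule] using hrhsold, has⟩
    obtain ⟨hOt, hd⟩ := ih2 hsrc
    refine ⟨hOt, ?_⟩
    rw [unembed_applyList, List.map_append]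
    show Deriv P (applyList (unembed (Exp.fn (Sum.inl r0.fn))) _) _
    refine ⟨.opr r0 hr0 (fun x => unembed (θ x)) (fun x => unembed_isPPat (hθ x))
      (es.map unembed) (as.map unembed) (unembed t)
      (by simp [embedRule] at hlen; simp [hlen]) ?_ ?_⟩
    · intro p hp
      refine Classical.choice (show Deriv _ p.1 p.2 from ?_)
      obtain ⟨i, h1, h2, he⟩ := zip_mem_getElem hp
      subst he
      simp only [List.getElem_map]
      exact (hlhs i (by simpa using h2)).2
    · refine Classical.choice (show Deriv _ _ _ from ?_)
      have : applyList (subst (fun x => unembed (θ x)) r0.rhs) (as.map unembed) =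
          unembed (applyList (subst θ (embedRule r0).rhs) as) := by
        rw [unembed_applyList]
        congr 1
        rw [show (embedRule r0).rhs = embed r0.rhs from rfl, unembed_subst_embed]
      rw [this]
      exact hd

end Transfer

section Forward
variable {σ : Sig} {P : Program σ}

lemma getD_range_map (ts : List (Exp σ)) :
    (List.range ts.length).map (fun i => embed (ts.getD i (Exp.var i))) = ts.map embed := by
  apply List.ext_getElem (by simp)
  intro i h1 h2
  simp only [List.getElem_map, List.getElem_range]
  rw [List.getD_eq_getElem ts _ (by simpa using h2)]

lemma subst_theta_lhs (H : Exp (extSig σ)) (hH : ∀ θ, subst θ H = H) (ts : List (Exp σ)) :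
    subst (fun i => embed (ts.getD i (Exp.var i)))
      (applyList H ((List.range ts.length).map Exp.var)) =
    applyList H (ts.map embed) := by
  rw [subst_applyList, hH, List.map_map]
  congr 1
  have : (subst (fun i => embed (ts.getD i (Exp.var i)))) ∘ Exp.var =
      fun i => embed (ts.getD i (Exp.var i)) := rfl
  rw [this, getD_range_map]

lemma subst_theta_rhs (ts : List (Exp σ)) :
    (ts.mapIdx fun i u => Exp.app (gE u) (Exp.var i)).map
        (subst (fun i => embed (ts.getD i (Exp.var i)))) =
    ts.mapIdx fun i u => Exp.app (gE u) (embed u) := by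
  apply List.ext_getElem (by simp)
  intro i h1 h2
  have hi : i < ts.length := by simpa using h2
  simp only [List.getElem_map, List.getElem_mapIdx, subst, gE]
  rw [List.getD_eq_getElem ts _ hi]

lemma forward_probe {t : Exp σ} (ht : IsPPat t) :
    ∀ {E : Exp (extSig σ)}, Deriv (embedProg P ∪ Pg σ) E (embed t) →
      Deriv (embedProg P ∪ Pg σ) (Exp.app (gE t) E) (hat t) := by
  induction ht with
  | var x =>
    intro E hE
    refine ⟨.opr (⟨Sum.inr (Exp.var x), [Exp.var 0], Exp.var 0⟩ : Rule (extSig σ)) (Or.inr (Or.inl ⟨x, rfl⟩))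
      (fun _ => Exp.var x) (fun _ => .var x) [E] [] (hat (Exp.var x)) rfl ?_ (.rr x)⟩
    intro p hp
    simp only [List.map_cons, List.map_nil, List.zip_cons_cons, List.zip_nil_right,
      List.mem_singleton] at hp
    subst hp
    exact Classical.choice hE
  | bot =>
    intro E hE
    refine ⟨.opr (⟨Sum.inr Exp.bot, [Exp.var 0], Exp.cn (Sum.inr ())⟩ : Rule (extSig σ)) (Or.inr (Or.inr (Or.inl rfl)))
      (fun _ => Exp.bot) (fun _ => .bot) [E] [] (hat Exp.bot) rfl ?_ ?_⟩
    · intro p hp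
      simp only [List.map_cons, List.map_nil, List.zip_cons_cons, List.zip_nil_right,
        List.mem_singleton] at hp
      subst hp
      exact .bot E
    · exact .dc (Exp.cn (σ := extSig σ) (Sum.inr ())) [] [] trivial rfl
        (IsPPat.capp (σ := extSig σ) (Sum.inr ()) [] (by simp) (by simp)) (fun p hp => absurd hp (by simp))
  | capp c ts har hts ih =>
    intro E hE
    have hp0 : IsPPat (applyList (symExp (Sum.inr c)) ts) := .capp c ts har hts
    refine ⟨.opr (gAppRule (Sum.inr c) ts) (Or.inr (Or.inr (Or.inr ⟨.inr c, ts, hp0, rfl⟩)))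
      (fun i => embed (ts.getD i (Exp.var i))) ?_ [E] [] _ rfl ?_ ?_⟩
    · intro i
      show IsPPat (embed (ts.getD i (Exp.var i)))
      by_cases h : i < ts.length
      · rw [List.getD_eq_getElem ts _ h]
        exact embed_isPPat (hts _ (List.getElem_mem _))
      · rw [List.getD_eq_default ts _ (by omega)]
        exact .var i
    · intro p hp
      simp only [gAppRule, List.map_cons, List.map_nil, List.zip_cons_cons,
        List.zip_nil_right, List.mem_singleton] at hp
      subst hp
      refine Classical.choice (show Deriv _ _ _ from ?_)
      have h2 : subst (fun i => embed (ts.getD i (Exp.var i)))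
          (applyList (embed (symExp (Sum.inr c))) ((List.range ts.length).map Exp.var)) =
          embed (applyList (Exp.cn c) ts) := by
        rw [subst_theta_lhs _ (fun θ => rfl) ts, embed_applyList]
        rfl
      rw [h2]
      exact hE
    · refine Classical.choice (show Deriv _ _ _ from ?_)
      simp only [applyList_nil, gAppRule]
      rw [subst_applyList, subst_theta_rhs ts]
      have hH : subst (fun i => embed (ts.getD i (Exp.var i)))
          (embed (symExp (Sum.inr c))) = Exp.cn (Sum.inl c) := rfl
      rw [hH]
      have hhat : hat (applyList (Exp.cn c) ts) =
          applyList (Exp.cn (Sum.inl c)) (ts.map hat) := by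
        rw [hat_applyList]; rfl
      rw [hhat]
      refine ⟨.dc (Exp.cn (Sum.inl c)) (ts.mapIdx fun i u => Exp.app (gE u) (embed u))
        (ts.map hat) trivial (by simp)
        (hhat ▸ hat_isPPat (IsPPat.capp c ts har hts))
        fun p hp => Classical.choice (show Deriv _ p.1 p.2 from ?_)⟩
      obtain ⟨i, i1, i2, he⟩ := zip_mem_getElem hp
      subst he
      simp only [List.getElem_map, List.getElem_mapIdx]
      exact ih _ (List.getElem_mem _)
        (deriv_refl (embed_isPPat (hts _ (List.getElem_mem _))))
  | fapp f ts har hts ih =>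
    intro E hE
    have hp0 : IsPPat (applyList (symExp (Sum.inl f)) ts) := .fapp f ts har hts
    refine ⟨.opr (gAppRule (Sum.inl f) ts) (Or.inr (Or.inr (Or.inr ⟨.inl f, ts, hp0, rfl⟩)))
      (fun i => embed (ts.getD i (Exp.var i))) ?_ [E] [] _ rfl ?_ ?_⟩
    · intro i
      show IsPPat (embed (ts.getD i (Exp.var i)))
      by_cases h : i < ts.length
      · rw [List.getD_eq_getElem ts _ h]
        exact embed_isPPat (hts _ (List.getElem_mem _))
      · rw [List.getD_eq_default ts _ (by omega)]
        exact .var i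
    · intro p hp
      simp only [gAppRule, List.map_cons, List.map_nil, List.zip_cons_cons,
        List.zip_nil_right, List.mem_singleton] at hp
      subst hp
      refine Classical.choice (show Deriv _ _ _ from ?_)
      have h2 : subst (fun i => embed (ts.getD i (Exp.var i)))
          (applyList (embed (symExp (Sum.inl f))) ((List.range ts.length).map Exp.var)) =
          embed (applyList (Exp.fn f) ts) := by
        rw [subst_theta_lhs _ (fun θ => rfl) ts, embed_applyList]
        rfl
      rw [h2]
      exact hE
    · refine Classical.choice (show Deriv _ _ _ from ?_)
      simp only [applyList_nil, gAppRule]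
      rw [subst_applyList, subst_theta_rhs ts]
      have hH : subst (fun i => embed (ts.getD i (Exp.var i)))
          (embed (symExp (Sum.inl f))) = Exp.fn (Sum.inl f) := rfl
      rw [hH]
      have hhat : hat (applyList (Exp.fn f) ts) =
          applyList (Exp.fn (Sum.inl f)) (ts.map hat) := by
        rw [hat_applyList]; rfl
      rw [hhat]
      refine ⟨.dc (Exp.fn (Sum.inl f)) (ts.mapIdx fun i u => Exp.app (gE u) (embed u))
        (ts.map hat) trivial (by simp)
        (hhat ▸ hat_isPPat (IsPPat.fapp f ts har hts))
        fun p hp => Classical.choice (show Deriv _ p.1 p.2 from ?_)⟩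
      obtain ⟨i, i1, i2, he⟩ := zip_mem_getElem hp
      subst he
      simp only [List.getElem_map, List.getElem_mapIdx]
      exact ih _ (List.getElem_mem _)
        (deriv_refl (embed_isPPat (hts _ (List.getElem_mem _))))

end Forward

section Backward
variable {σ : Sig} {P : Program σ}

lemma notApp_symExp (h : σ.FS ⊕ σ.CS) : NotApp (symExp h) := by
  cases h <;> trivial

lemma notApp_embed_symExp (h : σ.FS ⊕ σ.CS) : NotApp (embed (symExp h)) := by
  cases h <;> trivial

/-- Inversion of a derivation of `g_t E ⇒ t̂`. -/
lemma probe_inv {t : Exp σ} {E : Exp (extSig σ)}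
    (hd : Deriv (embedProg P ∪ Pg σ) (Exp.app (gE t) E) (hat t)) :
    ∃ r, r ∈ Pg σ ∧ r.fn = Sum.inr t ∧ ∃ θ L, PSub θ ∧ r.lhs = [L] ∧
      Deriv (embedProg P ∪ Pg σ) E (subst θ L) ∧
      Deriv (embedProg P ∪ Pg σ) (subst θ r.rhs) (hat t) := by
  obtain ⟨d⟩ := hd
  rcases deriv_cases d with hb | ⟨x, hx, _⟩ | ⟨h, es, ts, h1, h2, hsym, hlen, hpat, hds⟩ |
    ⟨r, hr, θ, es, as, hθ, h1, hlen, hds, hcont⟩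
  · exact absurd hb (hat_ne_bot t)
  · simp at hx
  · have h1' : applyList (gE t) [E] = applyList h es := h1
    obtain ⟨rfl, rfl⟩ := applyList_inj (by trivial) (isSymb_notApp hsym) h1'
    have := isPPat_fn_length (σ := extSig σ) (f := Sum.inr t) (es := ts) (by exact hpat)
    simp only [extSig_arityF_inr] at this
    simp only [List.length_singleton] at hlen
    omega
  · have h1' : applyList (gE t) [E] = applyList (Exp.fn r.fn) (es ++ as) := h1
    obtain ⟨hfn, hargs⟩ := applyList_inj (by trivial) (by trivial) h1'
    have hfn' : r.fn = Sum.inr t := (Exp.fn.inj hfn).symm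
    have hrPg : r ∈ Pg σ := by
      rcases hr with ⟨r0, hr0, rfl⟩ | hr
      · simp [embedRule] at hfn'
      · exact hr
    have hL1 : r.lhs.length = 1 := pg_lhs hrPg
    rw [hL1] at hlen
    obtain ⟨a, es', rfl⟩ : ∃ a es', es = a :: es' := by
      cases es with
      | nil => simp at hlen
      | cons a es' => exact ⟨a, es', rfl⟩
    have h5 : a :: (es' ++ as) = [E] := by simpa using hargs.symm
    obtain ⟨rfl, h6⟩ := List.cons.inj h5
    obtain ⟨rfl, rfl⟩ := List.append_eq_nil_iff.1 h6
    obtain ⟨L, hL⟩ := List.length_eq_one_iff.1 hL1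
    refine ⟨r, hrPg, hfn', θ, L, hθ, hL, ?_, ?_⟩
    · exact hds (a, subst θ L) (by simp [hL])
    · have := hcont
      simpa using this
end Backward

section BackwardMain
variable {σ : Sig} {P : Program σ}

lemma isSymb_symExp (h : σ.FS ⊕ σ.CS) : IsSymb (symExp h) := by cases h <;> trivial

lemma symExp_inj {h h' : σ.FS ⊕ σ.CS} (he : symExp h = symExp h') : h = h' := by
  cases h <;> cases h' <;> simp [symExp] at he ⊢ <;> assumption

lemma hat_symExp (h : σ.FS ⊕ σ.CS) : hat (symExp h) = embed (symExp h) := by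
  cases h <;> rfl

lemma backward_core (hP : WFProg P) (h0 : σ.FS ⊕ σ.CS) (ts : List (Exp σ))
    (hpt : IsPPat (applyList (symExp h0) ts))
    (ih : ∀ u ∈ ts, ∀ {E : Exp (extSig σ)}, Old E →
      Deriv (embedProg P ∪ Pg σ) (Exp.app (gE u) E) (hat u) → Deriv P (unembed E) u)
    {E : Exp (extSig σ)} (hE : Old E)
    (hd : Deriv (embedProg P ∪ Pg σ) (Exp.app (gE (applyList (symExp h0) ts)) E)
      (hat (applyList (symExp h0) ts))) :
    Deriv P (unembed E) (applyList (symExp h0) ts) := by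
  obtain ⟨r, hrPg, hfn, θ, L, hθ, hL, dE, dC⟩ := probe_inv hd
  -- identify the rule as `gAppRule h0 ts`
  rcases hrPg with ⟨x', he⟩ | he | ⟨h', ts', hp', he⟩
  · subst he
    simp only at hfn
    have := Sum.inr.inj hfn
    obtain ⟨h9, h10⟩ := applyList_eq_self (by trivial) this.symm
    cases h0 <;> simp [symExp] at h10
  · subst he
    simp only at hfn
    have := Sum.inr.inj hfn
    obtain ⟨h9, h10⟩ := applyList_eq_self (by trivial) this.symm
    cases h0 <;> simp [symExp] at h10
  · subst he
    simp only [gAppRule] at hfn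
    have h11 := Sum.inr.inj hfn
    obtain ⟨h12, h13⟩ := applyList_inj (notApp_symExp h') (notApp_symExp h0) h11
    cases symExp_inj h12
    have h14 := h13.symm
    subst h14
    -- extract `L`
    simp only [gAppRule, List.cons.injEq] at hL
    obtain ⟨hLe, -⟩ := hL
    subst hLe
    set θ₀ : ℕ → Exp σ := fun x => unembed (θ x) with hθ₀
    -- the lhs is the embedding of an old pattern
    have hL0 : applyList (embed (symExp h0)) ((List.range ts.length).map Exp.var) =
        embed (applyList (symExp h0) ((List.range ts.length).map Exp.var)) := by
      rw [embed_applyList, List.map_map]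
      congr 1
    rw [hL0] at dE
    obtain ⟨hOldL, DA⟩ := back_deriv hP (Classical.choice dE) hE
    rw [unembed_subst_embed] at DA
    have hsubL : subst θ₀ (applyList (symExp h0) ((List.range ts.length).map Exp.var)) =
        applyList (symExp h0) ((List.range ts.length).map θ₀) := by
      rw [subst_applyList, List.map_map]
      congr 1
      · cases h0 <;> rfl
    rw [hsubL] at DA
    -- each `θ i` is old for `i < m`
    have hocc : occVars (applyList (symExp h0) ((List.range ts.length).map Exp.var)) =
        List.range ts.length := by
      rw [occVars_applyList, List.flatMap_map]
      have : occVars (symExp h0) = [] := by cases h0 <;> rfl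
      simp [this, occVars]
    have hOldθ : ∀ i, i < ts.length → Old (θ i) := by
      intro i hi
      exact old_subst_var (by rw [hocc]; exact List.mem_range.2 hi) hOldL
    -- analyze the continuation derivation
    have hrhs : subst θ (gAppRule h0 ts).rhs =
        applyList (embed (symExp h0))
          ((ts.mapIdx fun i u => Exp.app (gE u) (Exp.var i)).map (subst θ)) := by
      simp only [gAppRule]
      rw [subst_applyList]
      congr 1
      cases h0 <;> rfl
    set MAP := (ts.mapIdx fun i u => Exp.app (gE u) (Exp.var i)).map (subst θ) with hMAP
    have hMAPlen : MAP.length = ts.length := by simp [hMAP]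
    have hMAPget : ∀ i (hi : i < ts.length), MAP[i]'(by rw [hMAPlen]; exact hi) =
        Exp.app (gE (ts[i]'(by omega))) (θ i) := by
      intro i hi
      simp only [hMAP, List.getElem_map, List.getElem_mapIdx]
      rfl
    have hhat : hat (applyList (symExp h0) ts) =
        applyList (embed (symExp h0)) (ts.map hat) := by
      rw [hat_applyList, hat_symExp]
    rw [hrhs] at dC
    obtain ⟨d2⟩ := dC
    have hB : ∀ i (hi : i < ts.length), Deriv P (θ₀ i) (ts[i]'hi) := by
      rcases deriv_cases d2 with hb | ⟨x, hx, -⟩ | ⟨h2, es2, ts2, heq1, heq2, hsym2, hlen2, hpat2, hds2⟩ |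
        ⟨r2, hr2, θ2, es2, as2, hθ2, heq1, hlen2, hds2, hcont2⟩
      · exact absurd hb (hat_ne_bot _)
      · obtain ⟨h9, h10⟩ := applyList_eq_self (by trivial) hx
        cases h0 <;> simp [embed, symExp] at h10
      · obtain ⟨rfl, rfl⟩ := applyList_inj (notApp_embed_symExp h0) (isSymb_notApp hsym2) heq1
        rw [hhat] at heq2
        obtain ⟨-, rfl⟩ := applyList_inj (notApp_embed_symExp h0) (notApp_embed_symExp h0) heq2
        intro i hi
        have hps := hds2 (MAP[i]'(by rw [hMAPlen]; exact hi), (ts.map hat)[i]'(by simp [hi]))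
          (zip_getElem_mem _ _ i (by rw [hMAPlen]; exact hi) (by simp [hi]))
        rw [hMAPget i hi] at hps
        simp only [List.getElem_map] at hps
        exact ih _ (List.getElem_mem _) (hOldθ i hi) hps
      · exfalso
        obtain ⟨hfn2, hargs2⟩ := applyList_inj (notApp_embed_symExp h0) (by trivial) heq1
        cases h0 with
        | inr c => simp [embed, symExp] at hfn2
        | inl f =>
          have harf : ts.length < σ.arityF f := isPPat_fn_length (by exact hpt)
          have hfn3 : r2.fn = Sum.inl f := by
            simp [embed, symExp] at hfn2
            exact Exp.fn.inj hfn2.symm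
          rcases hr2 with ⟨r0, hr0, rfl⟩ | hr2
          · have hwf := (hP r0 hr0).1.1
            have : r0.fn = f := Sum.inl.inj hfn3
            have hlen3 : es2.length = r0.lhs.length := by simpa [embedRule] using hlen2
            rw [this] at hwf
            have hlen4 := congrArg List.length hargs2
            simp only [List.length_append, hMAPlen] at hlen4
            omega
          · obtain ⟨u, hu⟩ := pg_fn_inr hr2
            rw [hu] at hfn3
            cases hfn3
    -- combine
    refine deriv_mono (Classical.choice DA) _ ?_ hpt
    refine approx_applyList (approx_refl_symb (isSymb_symExp h0)) (by simp) ?_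
    intro p hp
    obtain ⟨i, i1, i2, he⟩ := zip_mem_getElem hp
    subst he
    simp only [List.getElem_map, List.getElem_range]
    have hi : i < ts.length := by omega
    exact approx_of_deriv hP (Classical.choice (hB i hi)) (unembed_isPPat (hθ i))

lemma backward_probe (hP : WFProg P) {t : Exp σ} (ht : IsPPat t) :
    ∀ {E : Exp (extSig σ)}, Old E →
      Deriv (embedProg P ∪ Pg σ) (Exp.app (gE t) E) (hat t) → Deriv P (unembed E) t := by
  induction ht with
  | var x =>
    intro E hE hd
    obtain ⟨r, hrPg, hfn, θ, L, hθ, hL, dE, dC⟩ := probe_inv hd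
    rcases hrPg with ⟨x', he⟩ | he | ⟨h', ts', hp', he⟩
    · subst he
      simp only at hfn
      cases Sum.inr.inj hfn
      simp only [List.cons.injEq] at hL
      obtain ⟨hLe, -⟩ := hL
      subst hLe
      have hvar : θ 0 = Exp.var x :=
        deriv_var_eq (wfProg_ext hP) (Classical.choice dC) (hθ 0)
      have dE' : Deriv (embedProg P ∪ Pg σ) E (Exp.var x) := by
        rw [show subst θ (Exp.var 0) = θ 0 from rfl, hvar] at dE
        exact dE
      obtain ⟨-, D⟩ := back_deriv hP (Classical.choice dE') hE
      exact D
    · subst he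
      simp only at hfn
      cases Sum.inr.inj hfn
    · subst he
      simp only [gAppRule] at hfn
      have h11 := Sum.inr.inj hfn
      obtain ⟨h9, h10⟩ := applyList_eq_self (by trivial) h11
      cases h' <;> simp [symExp] at h10
  | bot =>
    intro E hE hd
    exact ⟨.bot _⟩
  | capp c ts har hts ih =>
    intro E hE hd
    exact backward_core hP (Sum.inr c) ts (IsPPat.capp c ts har hts)
      (fun u hu {E} hE hd => ih u hu hE hd) hE hd
  | fapp f ts har hts ih =>
    intro E hE hd
    exact backward_core hP (Sum.inl f) ts (IsPPat.fapp f ts har hts)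
      (fun u hu {E} hE hd => ih u hu hE hd) hE hd

end BackwardMain

section Final
variable {σ : Sig}

lemma expFS_embed {e : Exp σ} : ∀ g ∈ expFS (embed e), ∃ f0, g = Sum.inl f0 := by
  induction e with
  | var x => simp [embed, expFS]
  | fn f => intro g hg; simp [embed, expFS] at hg; exact ⟨f, hg⟩
  | cn c => simp [embed, expFS]
  | bot => simp [embed, expFS]
  | app a b ih1 ih2 =>
    intro g hg
    rcases hg with hg | hg
    · exact ih1 g hg
    · exact ih2 g hg

lemma progFS_embed {P : Program σ} : ∀ g ∈ progFS (embedProg P), ∃ f0, g = Sum.inl f0 := by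
  intro g hg
  simp only [progFS, Set.mem_iUnion] at hg
  obtain ⟨r, hr, hg⟩ := hg
  obtain ⟨r0, hr0, rfl⟩ := hr
  rcases hg with hg | hg
  · exact ⟨r0.fn, hg⟩
  · rcases hg with hg | hg
    · simp only [embedRule, Set.mem_iUnion] at hg
      obtain ⟨u, hu, hg⟩ := hg
      simp only [List.mem_map] at hu
      obtain ⟨u0, hu0, rfl⟩ := hu
      exact expFS_embed g hg
    · exact expFS_embed g hg
end Final

/-- **Lemma 2 (pattern probing)**: `P' = P ⊎ P_{g_t}` is a safe extension of
`(P, e)` and, for every expression `e` and partial pattern `t` built with the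
signature of `P`, `t ∈ ⟦e⟧^P` iff `t̂ ∈ ⟦g_t e⟧^{P'}`. -/
theorem pattern_probing (σ : Sig) (P : Program σ) (hP : WFProg P) :
    (∀ e : Exp σ, SafeExt (embedProg P) (embedProg P ∪ Pg σ) (embed e)) ∧
    (∀ (e t : Exp σ), IsPPat t →
      (t ∈ den P e ↔
        hat t ∈ den (embedProg P ∪ Pg σ) (Exp.app (gE t) (embed e)))) := by
  constructor
  · intro e
    refine ⟨Pg σ, rfl, ?_, ?_⟩
    · rw [Set.disjoint_left]
      intro r hr hrPg
      obtain ⟨r0, hr0, rfl⟩ := hr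
      obtain ⟨u, hu⟩ := pg_fn_inr hrPg
      simp [embedRule] at hu
    · rw [Set.disjoint_left]
      intro g hg hg2
      obtain ⟨r, hr, rfl⟩ := hg
      obtain ⟨u, hu⟩ := pg_fn_inr hr
      rcases hg2 with hg2 | hg2
      · obtain ⟨f0, hf0⟩ := expFS_embed _ hg2
        rw [hu] at hf0
        cases hf0
      · obtain ⟨f0, hf0⟩ := progFS_embed _ hg2
        rw [hu] at hf0
        cases hf0
  · intro e t ht
    constructor
    · rintro ⟨-, hder⟩
      refine ⟨hat_isPPat ht, ?_⟩
      exact forward_probe ht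
        (deriv_prog_mono Set.subset_union_left
          (Classical.choice (embed_deriv (Classical.choice hder))))
    · rintro ⟨-, hder⟩
      refine ⟨ht, ?_⟩
      have := backward_probe hP ht (old_embed e) hder
      rwa [unembed_embed] at this
end

section
/- Unsoundness of the 1-extensional semantics: in the program P of Example 1 (with constructors 0/0, s/1 and rules g X → 0, h X → s 0, f → g, f → h, f' X → f X, fadd F G X → (F X) + (G X), fdouble F → fadd F F, plus the usual rules for + on naturals built from 0 and s), the expressions f and f' are 1-extensionally equivalent (⟦f⟧_{ext_1} = ⟦f'⟧_{ext_1}), yet Obs^P(fdouble f 0) ≠ Obs^P(fdouble f' 0); hence the extensional semantics ⟦·⟧_{ext_1} is unsound with respect to Obs (and with respect to Obs_FO). -/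
variable {σ : Sig}

/-- Function symbols of the Example 1 program. -/
inductive Ex1F where | g | h | f | f' | fadd | fdouble | plus

/-- Constructor symbols of the Example 1 program: `0` and `s`. -/
inductive Ex1C where | zero | succ

/-- The signature of the Example 1 program. -/
def ex1Sig : Sig where
  FS := Ex1F
  CS := Ex1C
  arityF := fun s => match s with
    | .g => 1 | .h => 1 | .f => 0 | .f' => 1 | .fadd => 3 | .fdouble => 1
    | .plus => 2
  arityC := fun s => match s with | .zero => 0 | .succ => 1

def zeroE : Exp ex1Sig := .cn .zero

def sE (e : Exp ex1Sig) : Exp ex1Sig := .app (.cn .succ) e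

def plusE (a b : Exp ex1Sig) : Exp ex1Sig := .app (.app (.fn .plus) a) b

/-- The Example 1 program: `g X → 0`, `h X → s 0`, `f → g`, `f → h`,
`f' X → f X`, `fadd F G X → (F X) + (G X)`, `fdouble F → fadd F F`,
`0 + Y → Y`, `(s X) + Y → s (X + Y)`. -/
def ex1Prog : Program ex1Sig :=
  { ⟨.g, [.var 0], zeroE⟩,
    ⟨.h, [.var 0], sE zeroE⟩,
    ⟨.f, [], .fn .g⟩,
    ⟨.f, [], .fn .h⟩,
    ⟨.f', [.var 0], .app (.fn .f) (.var 0)⟩,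
    ⟨.fadd, [.var 0, .var 1, .var 2],
      plusE (.app (.var 0) (.var 2)) (.app (.var 1) (.var 2))⟩,
    ⟨.fdouble, [.var 0], .app (.app (.fn .fadd) (.var 0)) (.var 0)⟩,
    ⟨.plus, [zeroE, .var 1], .var 1⟩,
    ⟨.plus, [sE (.var 0), .var 1], sE (plusE (.var 0) (.var 1))⟩ }

/-- The expression `fdouble f 0`. -/
def fdouble_f_0 : Exp ex1Sig := .app (.app (.fn .fdouble) (.fn .f)) zeroE

/-- The expression `fdouble f' 0`. -/
def fdouble_f'_0 : Exp ex1Sig := .app (.app (.fn .fdouble) (.fn .f')) zeroE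


namespace Prop2
@[simp] lemma ex1_fn_inj (a b : Ex1F) : (Exp.fn (σ := ex1Sig) a = Exp.fn b) ↔ a = b :=
  ⟨fun h => by injection h, fun h => h ▸ rfl⟩


open Exp

def sHead : Exp σ → Exp σ
  | .app a _ => sHead a
  | e => e

def sArgs : Exp σ → List (Exp σ)
  | .app a b => sArgs a ++ [b]
  | _ => []

@[simp] lemma applyList_nil (e : Exp σ) : applyList e [] = e := rfl

@[simp] lemma applyList_cons (e a : Exp σ) (es) :
    applyList e (a :: es) = applyList (.app e a) es := rfl

lemma sHead_applyList (h : Exp σ) (es) : sHead (applyList h es) = sHead h := by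
  induction es generalizing h with
  | nil => rfl
  | cons a es ih => rw [applyList_cons, ih]; rfl

lemma sArgs_applyList (h : Exp σ) (es) : sArgs (applyList h es) = sArgs h ++ es := by
  induction es generalizing h with
  | nil => simp
  | cons a es ih => rw [applyList_cons, ih]; simp [sArgs]

lemma sHead_symb {h : Exp σ} (hs : IsSymb h) : sHead h = h := by
  cases h <;> first | rfl | exact hs.elim

lemma sArgs_symb {h : Exp σ} (hs : IsSymb h) : sArgs h = [] := by
  cases h <;> first | rfl | exact hs.elim

lemma applyList_symb_eq {h : Exp σ} (hs : IsSymb h) {es : List (Exp σ)} {E : Exp σ}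
    (heq : applyList h es = E) : h = sHead E ∧ es = sArgs E := by
  constructor
  · rw [← heq, sHead_applyList, sHead_symb hs]
  · have h2 := congrArg sArgs heq
    rw [sArgs_applyList, sArgs_symb hs] at h2
    simpa using h2

lemma ppat_spec {e : Exp σ} (h : IsPPat e) :
    (∃ x, e = .var x) ∨ e = .bot ∨
    (∃ c ts, e = applyList (.cn c) ts ∧ ts.length ≤ σ.arityC c ∧ ∀ t ∈ ts, IsPPat t) ∨
    (∃ f ts, e = applyList (.fn f) ts ∧ ts.length < σ.arityF f ∧ ∀ t ∈ ts, IsPPat t) := by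
  cases h with
  | var x => exact .inl ⟨x, rfl⟩
  | bot => exact .inr (.inl rfl)
  | capp c ts har hts => exact .inr (.inr (.inl ⟨c, ts, rfl, har, hts⟩))
  | fapp f ts har hts => exact .inr (.inr (.inr ⟨f, ts, rfl, har, hts⟩))

lemma ppat_fn_lt {f : σ.FS} {ts : List (Exp σ)}
    (h : IsPPat (applyList (.fn f) ts)) : ts.length < σ.arityF f := by
  rcases ppat_spec h with ⟨x, hx⟩ | hb | ⟨c, ts', he, _, _⟩ | ⟨f', ts', he, hlt, _⟩
  · have := congrArg sHead hx
    rw [sHead_applyList] at this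
    simp [sHead] at this
  · have := congrArg sHead hb
    rw [sHead_applyList] at this
    simp [sHead] at this
  · have := congrArg sHead he
    rw [sHead_applyList, sHead_applyList] at this
    simp [sHead] at this
  · have h1 := congrArg sHead he
    rw [sHead_applyList, sHead_applyList] at h1
    simp [sHead] at h1
    have h2 := congrArg sArgs he
    rw [sArgs_applyList, sArgs_applyList] at h2
    simp [sArgs] at h2
    subst h1; subst h2; exact hlt

lemma ppat_bot_args {ts : List (Exp σ)}
    (h : IsPPat (applyList .bot ts)) : ts = [] := by
  rcases ppat_spec h with ⟨x, hx⟩ | hb | ⟨c, ts', he, _, _⟩ | ⟨f', ts', he, hlt, _⟩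
  · have := congrArg sHead hx
    rw [sHead_applyList] at this
    simp [sHead] at this
  · have := congrArg sArgs hb
    rw [sArgs_applyList] at this
    simpa [sArgs] using this.symm
  · have := congrArg sHead he
    rw [sHead_applyList, sHead_applyList] at this
    simp [sHead] at this
  · have := congrArg sHead he
    rw [sHead_applyList, sHead_applyList] at this
    simp [sHead] at this


/-! ### Inversion lemmas -/

lemma symb_eq {h : Exp σ} {es : List (Exp σ)} {E : Exp σ}
    (heq : applyList h es = E) (hs : IsSymb h) : h = sHead E ∧ es = sArgs E :=
  applyList_symb_eq hs heq

lemma L_bot {E t : Exp ex1Sig} (hE : E = .bot) (hd : Deriv ex1Prog E t) : t = .bot := by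
  obtain ⟨d⟩ := hd
  cases d with
  | rr x => simp [zeroE, sE] at hE
  | bot => rfl
  | dc h es ts hsym hlen hpat ds =>
      obtain ⟨hh, hes⟩ := symb_eq hE hsym
      simp [sHead] at hh
      simp [sArgs] at hes
      subst hh; subst hes
      match ts, hlen with
      | [], _ => rfl
  | opr r hr θ hθ es as t' hlen ds d =>
      obtain ⟨hh, _⟩ := symb_eq hE (by constructor)
      simp [sHead] at hh

lemma L_zero {E t : Exp ex1Sig} (hE : E = zeroE) (hd : Deriv ex1Prog E t) :
    t = .bot ∨ t = zeroE := by
  obtain ⟨d⟩ := hd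
  cases d with
  | rr x => simp [zeroE, sE] at hE
  | bot => exact .inl rfl
  | dc h es ts hsym hlen hpat ds =>
      obtain ⟨hh, hes⟩ := symb_eq hE hsym
      simp [sHead, zeroE] at hh
      simp [sArgs, zeroE] at hes
      subst hh; subst hes
      match ts, hlen with
      | [], _ => exact .inr rfl
  | opr r hr θ hθ es as t' hlen ds d =>
      obtain ⟨hh, _⟩ := symb_eq hE (by constructor)
      simp [sHead, zeroE] at hh

lemma L_s {E e t : Exp ex1Sig} (hE : E = sE e) (hd : Deriv ex1Prog E t) :
    t = .bot ∨ ∃ t0, t = sE t0 ∧ Deriv ex1Prog e t0 := by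
  obtain ⟨d⟩ := hd
  cases d with
  | rr x => simp [zeroE, sE] at hE
  | bot => exact .inl rfl
  | dc h es ts hsym hlen hpat ds =>
      obtain ⟨hh, hes⟩ := symb_eq hE hsym
      simp [sHead, sE] at hh
      simp [sArgs, sE] at hes
      subst hh; subst hes
      match ts, hlen with
      | [t0], _ => exact .inr ⟨t0, rfl, ⟨ds (e, t0) (by simp)⟩⟩
  | opr r hr θ hθ es as t' hlen ds d =>
      obtain ⟨hh, _⟩ := symb_eq hE (by constructor)
      simp [sHead, sE] at hh


deriving instance DecidableEq for Ex1F
deriving instance DecidableEq for Ex1C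

lemma mem_rules {r : Rule ex1Sig} (hr : r ∈ ex1Prog) :
    r = ⟨.g, [.var 0], zeroE⟩ ∨ r = ⟨.h, [.var 0], sE zeroE⟩ ∨
    r = ⟨.f, [], .fn .g⟩ ∨ r = ⟨.f, [], .fn .h⟩ ∨
    r = ⟨.f', [.var 0], .app (.fn .f) (.var 0)⟩ ∨
    r = ⟨.fadd, [.var 0, .var 1, .var 2],
      plusE (.app (.var 0) (.var 2)) (.app (.var 1) (.var 2))⟩ ∨
    r = ⟨.fdouble, [.var 0], .app (.app (.fn .fadd) (.var 0)) (.var 0)⟩ ∨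
    r = ⟨.plus, [zeroE, .var 1], .var 1⟩ ∨
    r = ⟨.plus, [sE (.var 0), .var 1], sE (plusE (.var 0) (.var 1))⟩ := by
  simpa only [ex1Prog, Set.mem_insert_iff, Set.mem_singleton_iff] using hr

lemma L_g0 {E t : Exp ex1Sig} (hE : E = .fn .g) (hd : Deriv ex1Prog E t) :
    t = .bot ∨ t = .fn .g := by
  obtain ⟨d⟩ := hd
  cases d with
  | rr x => simp at hE
  | bot => exact .inl rfl
  | dc h es ts hsym hlen hpat ds =>
      obtain ⟨hh, hes⟩ := symb_eq hE hsym
      simp [sHead] at hh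
      simp [sArgs] at hes
      subst hh; subst hes
      match ts, hlen with
      | [], _ => exact .inr rfl
  | opr r hr θ hθ es as t' hlen ds d =>
      obtain ⟨hh, hes⟩ := symb_eq hE (by constructor)
      simp [sHead] at hh
      simp [sArgs] at hes
      obtain ⟨rfl, rfl⟩ := hes
      rcases mem_rules hr with rfl|rfl|rfl|rfl|rfl|rfl|rfl|rfl|rfl <;>
        simp at hh hlen

lemma L_h0 {E t : Exp ex1Sig} (hE : E = .fn .h) (hd : Deriv ex1Prog E t) :
    t = .bot ∨ t = .fn .h := by
  obtain ⟨d⟩ := hd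
  cases d with
  | rr x => simp at hE
  | bot => exact .inl rfl
  | dc h es ts hsym hlen hpat ds =>
      obtain ⟨hh, hes⟩ := symb_eq hE hsym
      simp [sHead] at hh
      simp [sArgs] at hes
      subst hh; subst hes
      match ts, hlen with
      | [], _ => exact .inr rfl
  | opr r hr θ hθ es as t' hlen ds d =>
      obtain ⟨hh, hes⟩ := symb_eq hE (by constructor)
      simp [sHead] at hh
      simp [sArgs] at hes
      obtain ⟨rfl, rfl⟩ := hes
      rcases mem_rules hr with rfl|rfl|rfl|rfl|rfl|rfl|rfl|rfl|rfl <;>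
        simp at hh hlen

lemma L_f0 {E t : Exp ex1Sig} (hE : E = .fn .f) (hd : Deriv ex1Prog E t) :
    t = .bot ∨ t = .fn .g ∨ t = .fn .h := by
  obtain ⟨d⟩ := hd
  cases d with
  | rr x => simp at hE
  | bot => exact .inl rfl
  | dc h es ts hsym hlen hpat ds =>
      obtain ⟨hh, hes⟩ := symb_eq hE hsym
      simp [sHead] at hh
      simp [sArgs] at hes
      subst hh; subst hes
      match ts, hlen with
      | [], _ =>
        have := ppat_fn_lt hpat
        simp [ex1Sig] at this
  | opr r hr θ hθ es as t' hlen ds d =>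
      obtain ⟨hh, hes⟩ := symb_eq hE (by constructor)
      simp [sHead] at hh
      simp [sArgs] at hes
      obtain ⟨rfl, rfl⟩ := hes
      rcases mem_rules hr with rfl|rfl|rfl|rfl|rfl|rfl|rfl|rfl|rfl <;>
        try simp at hh
      · rcases L_g0 rfl ⟨d⟩ with h1|h1
        · exact .inl h1
        · exact .inr (.inl h1)
      · rcases L_h0 rfl ⟨d⟩ with h1|h1
        · exact .inl h1
        · exact .inr (.inr h1)


lemma L_botapp {E e t : Exp ex1Sig} (hE : E = .app .bot e) (hd : Deriv ex1Prog E t) :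
    t = .bot := by
  obtain ⟨d⟩ := hd
  cases d with
  | rr x => simp at hE
  | bot => rfl
  | dc h es ts hsym hlen hpat ds =>
      obtain ⟨hh, hes⟩ := symb_eq hE hsym
      simp [sHead] at hh
      simp [sArgs] at hes
      subst hh; subst hes
      match ts, hlen with
      | [t1], _ =>
        have := ppat_bot_args hpat
        simp at this
  | opr r hr θ hθ es as t' hlen ds d =>
      obtain ⟨hh, _⟩ := symb_eq hE (by constructor)
      simp [sHead] at hh

lemma L_gapp {E e t : Exp ex1Sig} (hE : E = .app (.fn .g) e) (hd : Deriv ex1Prog E t) :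
    t = .bot ∨ t = zeroE := by
  obtain ⟨d⟩ := hd
  cases d with
  | rr x => simp at hE
  | bot => exact .inl rfl
  | dc h es ts hsym hlen hpat ds =>
      obtain ⟨hh, hes⟩ := symb_eq hE hsym
      simp [sHead] at hh
      simp [sArgs] at hes
      subst hh; subst hes
      match ts, hlen with
      | [t1], _ =>
        have := ppat_fn_lt hpat
        simp [ex1Sig] at this
  | opr r hr θ hθ es as t' hlen ds d =>
      obtain ⟨hh, hes⟩ := symb_eq hE (by constructor)
      simp [sHead] at hh
      simp [sArgs] at hes
      rcases mem_rules hr with rfl|rfl|rfl|rfl|rfl|rfl|rfl|rfl|rfl <;> try simp at hh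
      match es, hlen with
      | [x], _ =>
        simp at hes
        obtain ⟨rfl, rfl⟩ := hes
        exact L_zero rfl ⟨d⟩

lemma L_happ {E e t : Exp ex1Sig} (hE : E = .app (.fn .h) e) (hd : Deriv ex1Prog E t) :
    t = .bot ∨ t = sE .bot ∨ t = sE zeroE := by
  obtain ⟨d⟩ := hd
  cases d with
  | rr x => simp at hE
  | bot => exact .inl rfl
  | dc h es ts hsym hlen hpat ds =>
      obtain ⟨hh, hes⟩ := symb_eq hE hsym
      simp [sHead] at hh
      simp [sArgs] at hes
      subst hh; subst hes
      match ts, hlen with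
      | [t1], _ =>
        have := ppat_fn_lt hpat
        simp [ex1Sig] at this
  | opr r hr θ hθ es as t' hlen ds d =>
      obtain ⟨hh, hes⟩ := symb_eq hE (by constructor)
      simp [sHead] at hh
      simp [sArgs] at hes
      rcases mem_rules hr with rfl|rfl|rfl|rfl|rfl|rfl|rfl|rfl|rfl <;> try simp at hh
      match es, hlen with
      | [x], _ =>
        simp at hes
        obtain ⟨rfl, rfl⟩ := hes
        rcases L_s rfl ⟨d⟩ with h1 | ⟨t0, rfl, h2⟩
        · exact .inl h1
        · rcases L_zero rfl h2 with rfl | rfl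
          · exact .inr (.inl rfl)
          · exact .inr (.inr rfl)

lemma L_fapp {E e t : Exp ex1Sig} (hE : E = .app (.fn .f) e) (hd : Deriv ex1Prog E t) :
    t = .bot ∨ t = zeroE ∨ t = sE .bot ∨ t = sE zeroE := by
  obtain ⟨d⟩ := hd
  cases d with
  | rr x => simp at hE
  | bot => exact .inl rfl
  | dc h es ts hsym hlen hpat ds =>
      obtain ⟨hh, hes⟩ := symb_eq hE hsym
      simp [sHead] at hh
      simp [sArgs] at hes
      subst hh; subst hes
      match ts, hlen with
      | [t1], _ =>
        have := ppat_fn_lt hpat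
        simp [ex1Sig] at this
  | opr r hr θ hθ es as t' hlen ds d =>
      obtain ⟨hh, hes⟩ := symb_eq hE (by constructor)
      simp [sHead] at hh
      simp [sArgs] at hes
      rcases mem_rules hr with rfl|rfl|rfl|rfl|rfl|rfl|rfl|rfl|rfl <;> try simp at hh
      · match es, hlen with
        | [], _ =>
          simp at hes
          subst hes
          rcases L_gapp rfl ⟨d⟩ with h1|h1
          · exact .inl h1
          · exact .inr (.inl h1)
      · match es, hlen with
        | [], _ =>
          simp at hes
          subst hes
          rcases L_happ rfl ⟨d⟩ with h1|h1|h1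
          · exact .inl h1
          · exact .inr (.inr (.inl h1))
          · exact .inr (.inr (.inr h1))

lemma L_fpapp {E e t : Exp ex1Sig} (hE : E = .app (.fn .f') e) (hd : Deriv ex1Prog E t) :
    t = .bot ∨ t = zeroE ∨ t = sE .bot ∨ t = sE zeroE := by
  obtain ⟨d⟩ := hd
  cases d with
  | rr x => simp at hE
  | bot => exact .inl rfl
  | dc h es ts hsym hlen hpat ds =>
      obtain ⟨hh, hes⟩ := symb_eq hE hsym
      simp [sHead] at hh
      simp [sArgs] at hes
      subst hh; subst hes
      match ts, hlen with
      | [t1], _ =>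
        have := ppat_fn_lt hpat
        simp [ex1Sig] at this
  | opr r hr θ hθ es as t' hlen ds d =>
      obtain ⟨hh, hes⟩ := symb_eq hE (by constructor)
      simp [sHead] at hh
      simp [sArgs] at hes
      rcases mem_rules hr with rfl|rfl|rfl|rfl|rfl|rfl|rfl|rfl|rfl <;> try simp at hh
      match es, hlen with
      | [x], _ =>
        simp at hes
        obtain ⟨rfl, rfl⟩ := hes
        exact L_fapp rfl ⟨d⟩


/-- Denotations of the partial patterns `⊥`, `0`. -/
lemma den2 {p u : Exp ex1Sig} (hp : p = .bot ∨ p = zeroE)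
    (hd : Deriv ex1Prog p u) : u = .bot ∨ u = zeroE := by
  rcases hp with rfl | rfl
  · exact .inl (L_bot rfl hd)
  · exact L_zero rfl hd

/-- Denotations of the partial patterns `⊥`, `s ⊥`, `s 0`. -/
lemma den3 {p u : Exp ex1Sig} (hp : p = .bot ∨ p = sE .bot ∨ p = sE zeroE)
    (hd : Deriv ex1Prog p u) : u = .bot ∨ u = sE .bot ∨ u = sE zeroE := by
  rcases hp with rfl | rfl | rfl
  · exact .inl (L_bot rfl hd)
  · rcases L_s rfl hd with h1 | ⟨t0, rfl, h2⟩
    · exact .inl h1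
    · rw [L_bot rfl h2]
      exact .inr (.inl rfl)
  · rcases L_s rfl hd with h1 | ⟨t0, rfl, h2⟩
    · exact .inl h1
    · rcases L_zero rfl h2 with rfl | rfl
      · exact .inr (.inl rfl)
      · exact .inr (.inr rfl)

lemma split_args {es as L : List (Exp σ)} (hes : es ++ as = L)
    (hlen : es.length = L.length) : es = L ∧ as = [] := by
  have h1 := congrArg List.length hes
  simp [hlen] at h1
  subst h1
  simpa using hes

lemma L_plusC {E a b t : Exp ex1Sig} (hE : E = plusE a b) (ht : t = zeroE)
    (Ha : ∀ u, Deriv ex1Prog a u → u = .bot ∨ u = zeroE)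
    (Hb : ∀ u, Deriv ex1Prog b u → u = .bot ∨ u = sE .bot ∨ u = sE zeroE)
    (hd : Deriv ex1Prog E t) : False := by
  obtain ⟨d⟩ := hd
  cases d with
  | rr x => simp [plusE] at hE
  | bot => simp [zeroE] at ht
  | dc h es ts hsym hlen hpat ds =>
      obtain ⟨hh, hes⟩ := symb_eq hE hsym
      simp [sHead, plusE] at hh
      simp [sArgs, plusE] at hes
      subst hh; subst hes
      match ts, hlen with
      | [t1, t2], _ =>
        have := ppat_fn_lt hpat
        simp [ex1Sig] at this; exact absurd this (by simp only [List.length]; omega)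
  | opr r hr θ hθ es as t' hlen ds d =>
      obtain ⟨hh, hes⟩ := symb_eq hE (by constructor)
      simp [sHead, plusE] at hh
      simp [sArgs, plusE] at hes
      rcases mem_rules hr with rfl|rfl|rfl|rfl|rfl|rfl|rfl|rfl|rfl <;> try simp at hh
      · -- rule 0 + Y → Y
        obtain ⟨rfl, rfl⟩ := split_args hes (by simpa using hlen)
        have d2 : DTree ex1Prog b (θ 1) := ds (b, θ 1) (by simp [subst, zeroE])
        have hd' : Deriv ex1Prog (θ 1) t := ⟨d⟩
        rcases den3 (Hb _ ⟨d2⟩) hd' with h1 | h1 | h1 <;> simp [ht, zeroE, sE] at h1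
      · -- rule (s X) + Y → s (X + Y)
        obtain ⟨rfl, rfl⟩ := split_args hes (by simpa using hlen)
        have d1 : DTree ex1Prog a (sE (θ 0)) := ds (a, sE (θ 0)) (by simp [subst, sE])
        rcases Ha _ ⟨d1⟩ with h1 | h1 <;> simp [sE, zeroE] at h1

lemma L_plusA {E a b t : Exp ex1Sig} (hE : E = plusE a b) (ht : t = sE zeroE)
    (Ha : ∀ u, Deriv ex1Prog a u → u = .bot ∨ u = zeroE)
    (Hb : ∀ u, Deriv ex1Prog b u → u = .bot ∨ u = zeroE)
    (hd : Deriv ex1Prog E t) : False := by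
  obtain ⟨d⟩ := hd
  cases d with
  | rr x => simp [plusE] at hE
  | bot => simp [sE] at ht
  | dc h es ts hsym hlen hpat ds =>
      obtain ⟨hh, hes⟩ := symb_eq hE hsym
      simp [sHead, plusE] at hh
      simp [sArgs, plusE] at hes
      subst hh; subst hes
      match ts, hlen with
      | [t1, t2], _ =>
        have := ppat_fn_lt hpat
        simp [ex1Sig] at this; exact absurd this (by simp only [List.length]; omega)
  | opr r hr θ hθ es as t' hlen ds d =>
      obtain ⟨hh, hes⟩ := symb_eq hE (by constructor)
      simp [sHead, plusE] at hh
      simp [sArgs, plusE] at hes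
      rcases mem_rules hr with rfl|rfl|rfl|rfl|rfl|rfl|rfl|rfl|rfl <;> try simp at hh
      · obtain ⟨rfl, rfl⟩ := split_args hes (by simpa using hlen)
        have d2 : DTree ex1Prog b (θ 1) := ds (b, θ 1) (by simp [subst, zeroE])
        have hd' : Deriv ex1Prog (θ 1) t := ⟨d⟩
        rcases den2 (Hb _ ⟨d2⟩) hd' with h1 | h1 <;> simp [ht, zeroE, sE] at h1
      · obtain ⟨rfl, rfl⟩ := split_args hes (by simpa using hlen)
        have d1 : DTree ex1Prog a (sE (θ 0)) := ds (a, sE (θ 0)) (by simp [subst, sE])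
        rcases Ha _ ⟨d1⟩ with h1 | h1 <;> simp [sE, zeroE] at h1

lemma L_plusB {E a b t : Exp ex1Sig} (hE : E = plusE a b) (ht : t = sE zeroE)
    (Ha : ∀ u, Deriv ex1Prog a u → u = .bot ∨ u = sE .bot ∨ u = sE zeroE)
    (Hb : ∀ u, Deriv ex1Prog b u → u = .bot ∨ u = sE .bot ∨ u = sE zeroE)
    (hd : Deriv ex1Prog E t) : False := by
  obtain ⟨d⟩ := hd
  cases d with
  | rr x => simp [plusE] at hE
  | bot => simp [sE] at ht
  | dc h es ts hsym hlen hpat ds =>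
      obtain ⟨hh, hes⟩ := symb_eq hE hsym
      simp [sHead, plusE] at hh
      simp [sArgs, plusE] at hes
      subst hh; subst hes
      match ts, hlen with
      | [t1, t2], _ =>
        have := ppat_fn_lt hpat
        simp [ex1Sig] at this; exact absurd this (by simp only [List.length]; omega)
  | opr r hr θ hθ es as t' hlen ds d =>
      obtain ⟨hh, hes⟩ := symb_eq hE (by constructor)
      simp [sHead, plusE] at hh
      simp [sArgs, plusE] at hes
      rcases mem_rules hr with rfl|rfl|rfl|rfl|rfl|rfl|rfl|rfl|rfl <;> try simp at hh
      · -- rule 0 + Y → Y : a must reduce to 0, impossible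
        obtain ⟨rfl, rfl⟩ := split_args hes (by simpa using hlen)
        have d1 : DTree ex1Prog a zeroE := ds (a, zeroE) (by simp [subst, zeroE])
        rcases Ha _ ⟨d1⟩ with h1 | h1 | h1 <;> simp [sE, zeroE] at h1
      · -- rule (s X) + Y → s (X + Y)
        obtain ⟨rfl, rfl⟩ := split_args hes (by simpa using hlen)
        have d1 : DTree ex1Prog a (sE (θ 0)) := ds (a, sE (θ 0)) (by simp [subst, sE])
        have d2 : DTree ex1Prog b (θ 1) := ds (b, θ 1) (by simp [subst, sE])
        have hθ0 : θ 0 = .bot ∨ θ 0 = zeroE := by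
          rcases Ha _ ⟨d1⟩ with h1 | h1 | h1
          · simp [sE] at h1
          · simp only [sE] at h1
            injection h1 with _ h2
            exact .inl h2
          · simp only [sE] at h1
            injection h1 with _ h2
            exact .inr h2
        have hd' : Deriv ex1Prog (sE (plusE (θ 0) (θ 1))) t := ⟨d⟩
        subst ht
        rcases L_s rfl hd' with h1 | ⟨t0, ht0, h2⟩
        · simp [sE] at h1
        · have ht0' : t0 = zeroE := by
            simp only [sE] at ht0
            injection ht0 with _ h3
            exact h3.symm
          refine L_plusC rfl ht0'
            (fun u hu => den2 hθ0 hu)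
            (fun u hu => den3 (Hb _ ⟨d2⟩) hu) h2

lemma L_fadd {E p e t : Exp ex1Sig}
    (hE : E = .app (.app (.app (.fn .fadd) p) p) e) (ht : t = sE zeroE)
    (hp : p = .bot ∨ p = .fn .g ∨ p = .fn .h) (hd : Deriv ex1Prog E t) : False := by
  obtain ⟨d⟩ := hd
  cases d with
  | rr x => simp at hE
  | bot => simp [sE] at ht
  | dc h es ts hsym hlen hpat ds =>
      obtain ⟨hh, hes⟩ := symb_eq hE hsym
      simp [sHead] at hh
      simp [sArgs] at hes
      subst hh; subst hes
      match ts, hlen with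
      | [t1, t2, t3], _ =>
        have := ppat_fn_lt hpat
        simp [ex1Sig] at this; exact absurd this (by simp only [List.length]; omega)
  | opr r hr θ hθ es as t' hlen ds d =>
      obtain ⟨hh, hes⟩ := symb_eq hE (by constructor)
      simp [sHead] at hh
      simp [sArgs] at hes
      rcases mem_rules hr with rfl|rfl|rfl|rfl|rfl|rfl|rfl|rfl|rfl <;> try simp at hh
      obtain ⟨rfl, rfl⟩ := split_args hes (by simpa using hlen)
      have d0 : DTree ex1Prog p (θ 0) := ds (p, θ 0) (by simp [subst])
      have d1 : DTree ex1Prog p (θ 1) := ds (p, θ 1) (by simp [subst])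
      have hd' : Deriv ex1Prog
          (plusE (.app (θ 0) (θ 2)) (.app (θ 1) (θ 2))) t := ⟨d⟩
      rcases hp with rfl | rfl | rfl
      · have h0 := L_bot rfl ⟨d0⟩
        have h1 := L_bot rfl ⟨d1⟩
        exact L_plusA rfl ht
          (fun u hu => .inl (L_botapp (by rw [h0]) hu))
          (fun u hu => .inl (L_botapp (by rw [h1]) hu)) hd'
      · refine L_plusA rfl ht (fun u hu => ?_) (fun u hu => ?_) hd'
        · rcases L_g0 rfl ⟨d0⟩ with h0 | h0
          · exact .inl (L_botapp (by rw [h0]) hu)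
          · exact L_gapp (by rw [h0]) hu
        · rcases L_g0 rfl ⟨d1⟩ with h1 | h1
          · exact .inl (L_botapp (by rw [h1]) hu)
          · exact L_gapp (by rw [h1]) hu
      · refine L_plusB rfl ht (fun u hu => ?_) (fun u hu => ?_) hd'
        · rcases L_h0 rfl ⟨d0⟩ with h0 | h0
          · exact .inl (L_botapp (by rw [h0]) hu)
          · exact L_happ (by rw [h0]) hu
        · rcases L_h0 rfl ⟨d1⟩ with h1 | h1
          · exact .inl (L_botapp (by rw [h1]) hu)
          · exact L_happ (by rw [h1]) hu

lemma L_main' {E t : Exp ex1Sig} (hE : E = fdouble_f_0) (ht : t = sE zeroE)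
    (hd : Deriv ex1Prog E t) : False := by
  rw [fdouble_f_0] at hE
  obtain ⟨d⟩ := hd
  cases d with
  | rr x => simp at hE
  | bot => simp [sE] at ht
  | dc h es ts hsym hlen hpat ds =>
      obtain ⟨hh, hes⟩ := symb_eq hE hsym
      simp [sHead] at hh
      simp [sArgs] at hes
      subst hh; subst hes
      match ts, hlen with
      | [t1, t2], _ =>
        have := ppat_fn_lt hpat
        simp [ex1Sig] at this
  | opr r hr θ hθ es as t' hlen ds d =>
      obtain ⟨hh, hes⟩ := symb_eq hE (by constructor)
      simp [sHead] at hh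
      simp [sArgs] at hes
      rcases mem_rules hr with rfl|rfl|rfl|rfl|rfl|rfl|rfl|rfl|rfl <;> try simp at hh
      match es, hlen with
      | [x], _ =>
        simp at hes
        obtain ⟨rfl, rfl⟩ := hes
        have d0 : DTree ex1Prog (.fn .f) (θ 0) := ds (.fn .f, θ 0) (by simp [subst])
        have hd' : Deriv ex1Prog
            (.app (.app (.app (.fn .fadd) (θ 0)) (θ 0)) zeroE) t := ⟨d⟩
        exact L_fadd rfl ht (L_f0 rfl ⟨d0⟩) hd'

lemma L_main (hd : Deriv ex1Prog fdouble_f_0 (sE zeroE)) : False :=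
  L_main' rfl rfl hd


/-! ### Positive derivations -/

lemma pp_0 : IsPPat (zeroE) := IsPPat.capp (σ := ex1Sig) Ex1C.zero [] (Nat.le_refl 0) (by simp)

lemma pp_s {t : Exp ex1Sig} (h : IsPPat t) : IsPPat (sE t) :=
  IsPPat.capp (σ := ex1Sig) Ex1C.succ [t] (Nat.le_refl 1)
    (by intro x hx; rw [List.mem_singleton] at hx; subst hx; exact h)

lemma pp_f' : IsPPat (.fn (.f') : Exp ex1Sig) :=
  IsPPat.fapp (σ := ex1Sig) Ex1F.f' [] Nat.zero_lt_one (by simp)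

def T0 : DTree ex1Prog zeroE zeroE :=
  .dc ((Exp.cn Ex1C.zero : Exp ex1Sig)) [] [] trivial rfl pp_0 (fun _ hp => absurd hp (by simp))

def Ts {e t : Exp ex1Sig} (d : DTree ex1Prog e t) (h : IsPPat t) :
    DTree ex1Prog (sE e) (sE t) :=
  .dc ((Exp.cn Ex1C.succ : Exp ex1Sig)) [e] [t] trivial rfl (pp_s h)
    (fun p hp => by simp at hp; subst hp; exact d)

def Tf' : DTree ex1Prog (.fn .f') (.fn .f') :=
  .dc ((Exp.fn Ex1F.f' : Exp ex1Sig)) [] [] trivial rfl pp_f' (fun _ hp => absurd hp (by simp))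

def Tg (e : Exp ex1Sig) : DTree ex1Prog (.app (.fn .g) e) zeroE :=
  .opr (⟨.g, [.var 0], zeroE⟩ : Rule ex1Sig) (by simp [ex1Prog]) (fun _ => .bot) (fun _ => .bot)
    [e] [] zeroE rfl (fun p hp => by simp [subst] at hp; subst hp; exact .bot e) T0

def Th0 (e : Exp ex1Sig) : DTree ex1Prog (.app (.fn .h) e) (sE zeroE) :=
  .opr (⟨.h, [.var 0], sE zeroE⟩ : Rule ex1Sig) (by simp [ex1Prog]) (fun _ => .bot) (fun _ => .bot)
    [e] [] (sE zeroE) rfl (fun p hp => by simp [subst] at hp; subst hp; exact .bot e) (Ts T0 pp_0)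

def Thb (e : Exp ex1Sig) : DTree ex1Prog (.app (.fn .h) e) (sE .bot) :=
  .opr (⟨.h, [.var 0], sE zeroE⟩ : Rule ex1Sig) (by simp [ex1Prog]) (fun _ => .bot) (fun _ => .bot)
    [e] [] (sE .bot) rfl (fun p hp => by simp [subst] at hp; subst hp; exact .bot e)
    (Ts (.bot zeroE) .bot)

def Tfg {e t : Exp ex1Sig} (d : DTree ex1Prog (.app (.fn .g) e) t) :
    DTree ex1Prog (.app (.fn .f) e) t :=
  .opr (⟨.f, [], .fn .g⟩ : Rule ex1Sig) (by simp [ex1Prog]) (fun _ => .bot) (fun _ => .bot)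
    [] [e] t rfl (fun _ hp => absurd hp (by simp)) d

def Tfh {e t : Exp ex1Sig} (d : DTree ex1Prog (.app (.fn .h) e) t) :
    DTree ex1Prog (.app (.fn .f) e) t :=
  .opr (⟨.f, [], .fn .h⟩ : Rule ex1Sig) (by simp [ex1Prog]) (fun _ => .bot) (fun _ => .bot)
    [] [e] t rfl (fun _ hp => absurd hp (by simp)) d

def Tf'app {e t : Exp ex1Sig} (d : DTree ex1Prog (.app (.fn .f) .bot) t) :
    DTree ex1Prog (.app (.fn .f') e) t :=
  .opr (⟨.f', [.var 0], .app (.fn .f) (.var 0)⟩ : Rule ex1Sig) (by simp [ex1Prog])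
    (fun _ => .bot) (fun _ => .bot)
    [e] [] t rfl (fun p hp => by simp [subst] at hp; subst hp; exact .bot e) d

/-- `⟦f e⟧ = ⟦f' e⟧` for every expression `e`. -/
lemma den_f_eq (e : Exp ex1Sig) :
    den ex1Prog (.app (.fn .f) e) = den ex1Prog (.app (.fn .f') e) := by
  ext u
  simp only [den, Set.mem_setOf_eq]
  constructor
  · rintro ⟨hp, hdv⟩
    refine ⟨hp, ?_⟩
    rcases L_fapp rfl hdv with rfl | rfl | rfl | rfl
    · exact ⟨.bot _⟩
    · exact ⟨Tf'app (Tfg (Tg _))⟩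
    · exact ⟨Tf'app (Tfh (Thb _))⟩
    · exact ⟨Tf'app (Tfh (Th0 _))⟩
  · rintro ⟨hp, hdv⟩
    refine ⟨hp, ?_⟩
    rcases L_fpapp rfl hdv with rfl | rfl | rfl | rfl
    · exact ⟨.bot _⟩
    · exact ⟨Tfg (Tg _)⟩
    · exact ⟨Tfh (Thb _)⟩
    · exact ⟨Tfh (Th0 _)⟩

/-- A derivation of `fdouble f' 0 ⇒ s 0`. -/
noncomputable def Dpos : DTree ex1Prog fdouble_f'_0 (sE zeroE) :=
  .opr (⟨.fdouble, [.var 0], .app (.app (.fn .fadd) (.var 0)) (.var 0)⟩ : Rule ex1Sig)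
    (by simp [ex1Prog]) (fun _ => .fn .f') (fun _ => pp_f')
    [.fn .f'] [zeroE] (sE zeroE) rfl
    (fun p hp => by simp [subst] at hp; subst hp; exact Tf')
    (.opr (⟨.fadd, [.var 0, .var 1, .var 2],
        plusE (.app (.var 0) (.var 2)) (.app (.var 1) (.var 2))⟩ : Rule ex1Sig)
      (by simp [ex1Prog])
      (fun n => match n with | 0 => .fn .f' | 1 => .fn .f' | _ => zeroE)
      (fun n => match n with | 0 => pp_f' | 1 => pp_f' | _+2 => pp_0)
      [.fn .f', .fn .f', zeroE] [] (sE zeroE) rfl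
      (fun p hp => by
        cases Classical.dec (p = ((.fn .f' : Exp ex1Sig), (.fn .f' : Exp ex1Sig))) with
        | isTrue h1 => subst h1; exact Tf'
        | isFalse h1 =>
          have h2 : p = (zeroE, zeroE) := by
            simp [subst] at hp
            tauto
          subst h2; exact T0)
      (.opr (⟨.plus, [zeroE, .var 1], .var 1⟩ : Rule ex1Sig) (by simp [ex1Prog])
        (fun n => match n with | 1 => sE zeroE | _ => .bot)
        (fun n => match n with | 1 => pp_s pp_0 | 0 => .bot | _+2 => .bot)
        [.app (.fn .f') zeroE, .app (.fn .f') zeroE] [] (sE zeroE) rfl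
        (fun p hp => by
          cases Classical.dec (p = (.app (.fn .f') zeroE, zeroE)) with
          | isTrue h1 => subst h1; exact Tf'app (Tfg (Tg _))
          | isFalse h1 =>
            have h2 : p = (.app (.fn .f') zeroE, sE zeroE) := by
              simp [subst, zeroE] at hp
              tauto
            subst h2; exact Tf'app (Tfh (Th0 _)))
        (Ts T0 pp_0)))

lemma fo_s0 : IsFOPat (sE zeroE) :=
  IsFOPat.capp (σ := ex1Sig) Ex1C.succ [zeroE] rfl
    (by
      intro x hx
      rw [List.mem_singleton] at hx
      subst hx
      exact IsFOPat.capp (σ := ex1Sig) Ex1C.zero [] rfl (by simp))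

end Prop2







/-- **Proposition 2 (unsoundness of the 1-extensional semantics)**: in the
Example 1 program, `f` and `f'` are 1-extensionally equivalent
(`⟦f⟧_{ext_1} = ⟦f'⟧_{ext_1}`, i.e. `⟦f t⟧ = ⟦f' t⟧` for every partial pattern
`t`), yet `Obs(fdouble f 0) ≠ Obs(fdouble f' 0)` and
`Obs_FO(fdouble f 0) ≠ Obs_FO(fdouble f' 0)`. -/
theorem ext1_unsound :
    (∀ t : Exp ex1Sig, IsPPat t →
      den ex1Prog (.app (.fn .f) t) = den ex1Prog (.app (.fn .f') t)) ∧
    Obs ex1Prog fdouble_f_0 ≠ Obs ex1Prog fdouble_f'_0 ∧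
    ObsFO ex1Prog fdouble_f_0 ≠ ObsFO ex1Prog fdouble_f'_0 := by
  refine ⟨fun t _ => Prop2.den_f_eq t, ?_, ?_⟩
  · intro h
    have hm : sE zeroE ∈ Obs ex1Prog fdouble_f'_0 :=
      ⟨⟨Prop2.pp_s Prop2.pp_0, ⟨Prop2.Dpos⟩⟩, ⟨trivial, trivial⟩⟩
    rw [← h] at hm
    exact Prop2.L_main hm.1.2
  · intro h
    have hm : sE zeroE ∈ ObsFO ex1Prog fdouble_f'_0 :=
      ⟨⟨Prop2.pp_s Prop2.pp_0, ⟨Prop2.Dpos⟩⟩, Prop2.fo_s0⟩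
    rw [← h] at hm
    exact Prop2.L_main hm.1.2
end
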